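/- arXiv:1910.03919 — 2 statements merged into one kernel-verified Lean document; each statement's English description precedes it below -/
import Mathlib

section
/- Let n and d be positive integers, let G be a game graph with n nodes and priorities up to d, and let A be an SFPG separator with input alphabet Σ_{n,d}. Then Even has a winning strategy in G if and only if Even has a winning strategy in the synchronized product G×A. -/
namespace PGSep

/-- Letters of the alphabet `Σ_{n,d}`: triples (source node, priority, target node). -/
abbrev Letter : Type := ℕ × ℕ × ℕ

/-- The priority component of a letter. -/
def prio (e : Letter) : ℕ := e.2.1

/-- Membership in the alphabet `Σ_{n,d} = {1,…,n} × {1,…,d} × {1,…,n}`. -/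
def InAlph (n d : ℕ) (e : Letter) : Prop :=
  1 ≤ e.1 ∧ e.1 ≤ n ∧ 1 ≤ e.2.1 ∧ e.2.1 ≤ d ∧ 1 ≤ e.2.2 ∧ e.2.2 ≤ n

/-- Infinite words over the alphabet. -/
abbrev Word : Type := ℕ → Letter

/-- `p` occurs infinitely often among the values of `f`. -/
def InfOft (f : ℕ → ℕ) (p : ℕ) : Prop := ∀ N, ∃ k, N ≤ k ∧ f k = p

/-- The largest value occurring infinitely often in `f` exists and is even. -/
def MaxInfOftEven (f : ℕ → ℕ) : Prop :=
  ∃ p, Even p ∧ InfOft f p ∧ ∀ q, InfOft f q → q ≤ p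

/-- The largest value occurring infinitely often in `f` exists and is odd. -/
def MaxInfOftOdd (f : ℕ → ℕ) : Prop :=
  ∃ p, Odd p ∧ InfOft f p ∧ ∀ q, InfOft f q → q ≤ p

/-- `LimsupEven_{n,d}`: the largest priority occurring infinitely often is even. -/
def LimsupEven (w : Word) : Prop := MaxInfOftEven fun k => prio (w k)

/-- `LimsupOdd_{n,d}`: the largest priority occurring infinitely often is odd. -/
def LimsupOdd (w : Word) : Prop := MaxInfOftOdd fun k => prio (w k)

/-- An infinite sequence of triples is a path in the edge set `E`. -/
def IsPathSeq {V : Type*} (E : Set (V × ℕ × V)) (w : ℕ → V × ℕ × V) : Prop :=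
  ∀ k, w k ∈ E ∧ (w k).2.2 = (w (k + 1)).1

/-- A game graph with `n` nodes (the set {1,…,n}) and priorities up to `d`. -/
structure GameGraph (n d : ℕ) where
  /-- nodes owned by Even (V_□) -/
  evenN : Set ℕ
  /-- nodes owned by Odd (V_△) -/
  oddN : Set ℕ
  /-- the starting node -/
  start : ℕ
  /-- the set of edges (a subset of the alphabet) -/
  edges : Set Letter
  union_eq : evenN ∪ oddN = Set.Icc 1 n
  disj : Disjoint evenN oddN
  start_mem : start ∈ Set.Icc 1 n
  edges_alph : ∀ e ∈ edges, InAlph n d e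
  total : ∀ v ∈ Set.Icc (1 : ℕ) n, ∃ e ∈ edges, e.1 = v

/-- A play in a game graph: an infinite path starting at the starting node,
identified with the word listing its consecutive edges. -/
def IsPlay {n d : ℕ} (G : GameGraph n d) (w : Word) : Prop :=
  (w 0).1 = G.start ∧ IsPathSeq G.edges w

/-- A positional strategy for Even: one outgoing edge for each node of `V_□`. -/
structure EPosStrat {n d : ℕ} (G : GameGraph n d) where
  choice : ℕ → Letter
  mem : ∀ v ∈ G.evenN, choice v ∈ G.edges ∧ (choice v).1 = v

/-- A positional strategy for Odd: one outgoing edge for each node of `V_△`. -/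
structure OPosStrat {n d : ℕ} (G : GameGraph n d) where
  choice : ℕ → Letter
  mem : ∀ v ∈ G.oddN, choice v ∈ G.edges ∧ (choice v).1 = v

/-- A play arises from a positional strategy of Even. -/
def ArisesE {n d : ℕ} {G : GameGraph n d} (τ : EPosStrat G) (w : Word) : Prop :=
  IsPlay G w ∧ ∀ k, (w k).1 ∈ G.evenN → w k = τ.choice (w k).1

/-- A play arises from a positional strategy of Odd. -/
def ArisesO {n d : ℕ} {G : GameGraph n d} (τ : OPosStrat G) (w : Word) : Prop :=
  IsPlay G w ∧ ∀ k, (w k).1 ∈ G.oddN → w k = τ.choice (w k).1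

/-- A positional strategy for Even is winning: every arising play is won by Even. -/
def EWinningPos {n d : ℕ} {G : GameGraph n d} (τ : EPosStrat G) : Prop :=
  ∀ w, ArisesE τ w → LimsupEven w

/-- A positional strategy for Odd is winning: every arising play is won by Odd
(i.e. not won by Even). -/
def OWinningPos {n d : ℕ} {G : GameGraph n d} (τ : OPosStrat G) : Prop :=
  ∀ w, ArisesO τ w → ¬ LimsupEven w

/-- `PosEven_{n,d}`: plays arising from positional winning strategies for Even. -/
def PosEven (n d : ℕ) : Set Word :=
  {w | ∃ G : GameGraph n d, ∃ τ : EPosStrat G, EWinningPos τ ∧ ArisesE τ w}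

/-- `PosOdd_{n,d}`: plays arising from positional winning strategies for Odd. -/
def PosOdd (n d : ℕ) : Set Word :=
  {w | ∃ G : GameGraph n d, ∃ τ : OPosStrat G, OWinningPos τ ∧ ArisesO τ w}

/-- A nondeterministic automaton reading letters, with state space `Q`. -/
structure Automaton (Q : Type*) where
  init : Q
  trans : Set (Q × Letter × ℕ × Q)

/-- Transitions: (source state, letter, emitted priority, target state). -/
abbrev Trans (Q : Type*) : Type _ := Q × Letter × ℕ × Q

def tSrc {Q : Type*} (t : Trans Q) : Q := t.1
def tLetter {Q : Type*} (t : Trans Q) : Letter := t.2.1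
def tPrio {Q : Type*} (t : Trans Q) : ℕ := t.2.2.1
def tTgt {Q : Type*} (t : Trans Q) : Q := t.2.2.2

/-- `A` is a (total) nondeterministic parity automaton over `Σ_{n,d}` with
transition priorities in `{1,…,d'}`. -/
def IsParityAutomaton (n d d' : ℕ) {Q : Type*} (A : Automaton Q) : Prop :=
  (∀ t ∈ A.trans, InAlph n d (tLetter t) ∧ 1 ≤ tPrio t ∧ tPrio t ≤ d') ∧
  (∀ (s : Q) (e : Letter), InAlph n d e → ∃ p s', (s, e, p, s') ∈ A.trans)

/-- A run of the automaton: an infinite path of transitions starting at `init`. -/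
def IsRun {Q : Type*} (A : Automaton Q) (ρ : ℕ → Trans Q) : Prop :=
  tSrc (ρ 0) = A.init ∧ ∀ k, ρ k ∈ A.trans ∧ tTgt (ρ k) = tSrc (ρ (k + 1))

/-- The run `ρ` reads the word `w`. -/
def Reads {Q : Type*} (ρ : ℕ → Trans Q) (w : Word) : Prop := ∀ k, tLetter (ρ k) = w k

/-- A run is accepting: the largest priority labelling infinitely many
of its transitions is even. -/
def Accepting {Q : Type*} (ρ : ℕ → Trans Q) : Prop := MaxInfOftEven fun k => tPrio (ρ k)

/-- The language of the automaton. -/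
def Lang {Q : Type*} (A : Automaton Q) : Set Word :=
  {w | ∃ ρ, IsRun A ρ ∧ Reads ρ w ∧ Accepting ρ}

/-- A transition strategy for `A`, resolving nondeterminism based on the word read
so far, the current state, and the next letter. -/
structure TransStrat (n d : ℕ) {Q : Type*} (A : Automaton Q) where
  app : List Letter → Q → Letter → Trans Q
  valid : ∀ w s e, InAlph n d e →
    app w s e ∈ A.trans ∧ tSrc (app w s e) = s ∧ tLetter (app w s e) = e

/-- The state reached after reading the first `k` letters of `w` following `σ`. -/
def stateAt {n d : ℕ} {Q : Type*} (A : Automaton Q) (σ : TransStrat n d A) (w : Word) :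
    ℕ → Q
  | 0 => A.init
  | k + 1 => tTgt (σ.app ((List.range k).map w) (stateAt A σ w k) (w k))

/-- The run obtained by following the transition strategy `σ` while reading `w`. -/
def followRun {n d : ℕ} {Q : Type*} (A : Automaton Q) (σ : TransStrat n d A) (w : Word)
    (k : ℕ) : Trans Q :=
  σ.app ((List.range k).map w) (stateAt A σ w k) (w k)

/-- The transition strategy `σ` is winning for the set of words `L`. -/
def WinningFor {n d : ℕ} {Q : Type*} (A : Automaton Q) (σ : TransStrat n d A)
    (L : Set Word) : Prop :=
  ∀ w ∈ L, Accepting (followRun A σ w)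

/-- `A` is good for games: some transition strategy is winning for the whole `L(A)`. -/
def GFG (n d : ℕ) {Q : Type*} (A : Automaton Q) : Prop :=
  ∃ σ : TransStrat n d A, WinningFor A σ (Lang A)

/-- `A` is a parity-games separator. -/
def PGSeparator (n d : ℕ) {Q : Type*} (A : Automaton Q) : Prop :=
  (∀ w ∈ PosEven n d, w ∈ Lang A) ∧ ∀ w ∈ PosOdd n d, w ∉ Lang A

/-- `A` is a strong PG separator: additionally it rejects all of `LimsupOdd`. -/
def StrongPGSeparator (n d : ℕ) {Q : Type*} (A : Automaton Q) : Prop :=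
  PGSeparator n d A ∧ ∀ w : Word, LimsupOdd w → w ∉ Lang A

/-- `A` is suitable for parity games (SFPG). -/
def SFPG (n d : ℕ) {Q : Type*} (A : Automaton Q) : Prop :=
  PGSeparator n d A ∧
  ∀ (G : GameGraph n d) (τ : EPosStrat G), EWinningPos τ →
    ∃ σ : TransStrat n d A, WinningFor A σ {w | ArisesE τ w}

/-- A generic game with parity winning condition, over an arbitrary set of nodes. -/
structure PGame (V : Type*) where
  evenOwn : V → Prop
  start : V
  edges : Set (V × ℕ × V)

/-- A play of a generic game. -/
def PGame.IsPlay {V : Type*} (g : PGame V) (w : ℕ → V × ℕ × V) : Prop :=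
  (w 0).1 = g.start ∧ IsPathSeq g.edges w

/-- `IsFinPath E u l v`: the list of edges `l` is a finite path from `u` to `v`. -/
def IsFinPath {V : Type*} (E : Set (V × ℕ × V)) : V → List (V × ℕ × V) → V → Prop
  | u, [], v => u = v
  | u, e :: l, v => e ∈ E ∧ e.1 = u ∧ IsFinPath E e.2.2 l v

/-- Even has a winning strategy in the game `g`. -/
def EvenWins {V : Type*} (g : PGame V) : Prop :=
  ∃ str : List (V × ℕ × V) → V × ℕ × V,
    (∀ l v, IsFinPath g.edges g.start l v → g.evenOwn v →
      str l ∈ g.edges ∧ (str l).1 = v) ∧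
    ∀ w, g.IsPlay w → (∀ k, g.evenOwn ((w k).1) → w k = str ((List.range k).map w)) →
      MaxInfOftEven fun k => (w k).2.1

/-- Odd has a winning strategy in the game `g`. -/
def OddWins {V : Type*} (g : PGame V) : Prop :=
  ∃ str : List (V × ℕ × V) → V × ℕ × V,
    (∀ l v, IsFinPath g.edges g.start l v → ¬ g.evenOwn v →
      str l ∈ g.edges ∧ (str l).1 = v) ∧
    ∀ w, g.IsPlay w → (∀ k, ¬ g.evenOwn ((w k).1) → w k = str ((List.range k).map w)) →
      ¬ MaxInfOftEven fun k => (w k).2.1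

/-- Even has a strategy winning for the safety condition `safe` in the game `g`. -/
def EvenWinsSafety {V : Type*} (g : PGame V) (safe : V → Prop) : Prop :=
  ∃ str : List (V × ℕ × V) → V × ℕ × V,
    (∀ l v, IsFinPath g.edges g.start l v → g.evenOwn v →
      str l ∈ g.edges ∧ (str l).1 = v) ∧
    ∀ w, g.IsPlay w → (∀ k, g.evenOwn ((w k).1) → w k = str ((List.range k).map w)) →
      ∀ k, safe (w k).2.2

/-- A game graph viewed as a generic game. -/
def GameGraph.toPGame {n d : ℕ} (G : GameGraph n d) : PGame ℕ :=
  { evenOwn := fun v => v ∈ G.evenN, start := G.start, edges := G.edges }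

/-- The synchronized product `G × A`. -/
def prodGame {n d : ℕ} {Q : Type*} (G : GameGraph n d) (A : Automaton Q) :
    PGame ((ℕ ⊕ Letter) × Q) where
  evenOwn := fun x => match x.1 with
    | Sum.inl v => v ∈ G.evenN
    | Sum.inr _ => True
  start := (Sum.inl G.start, A.init)
  edges := {ed | (∃ e ∈ G.edges, ∃ s : Q, ed = ((Sum.inl e.1, s), 1, (Sum.inr e, s))) ∨
    (∃ t ∈ A.trans, tLetter t ∈ G.edges ∧
      ed = ((Sum.inr (tLetter t), tSrc t), tPrio t, (Sum.inl (tLetter t).2.2, tTgt t)))}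

/-- The number of registers: `rn(n) = 1 + ⌊log₂ n⌋`. -/
def rn (n : ℕ) : ℕ := 1 + Nat.log 2 n

/-- Update of a register state (bottom register first) by priority `p`:
the maximal prefix of registers smaller than `p` is replaced by `p`. -/
def update (p : ℕ) : List ℕ → List ℕ
  | [] => []
  | r :: l => if r < p then p :: update p l else r :: l

/-- The `k`-reset (registers numbered from 1, bottom first): the `k`-th register is
removed and a `1` is inserted at the bottom. -/
def resetReg (k : ℕ) (l : List ℕ) : List ℕ := 1 :: l.eraseIdx (k - 1)

/-- The value of register number `k` (registers numbered from 1, bottom first). -/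
def regVal (k : ℕ) (l : List ℕ) : ℕ := l.getD (k - 1) 0

/-- Lehtinen's register automaton `R_{n,d}`. -/
def Raut (n d : ℕ) : Automaton (List ℕ) where
  init := List.replicate (rn n) 1
  trans := {t | ∃ s e, InAlph n d e ∧
    (t = (s, e, 1, update (prio e) s) ∨
     ∃ k, 1 ≤ k ∧ k ≤ rn n ∧
       ((Even (regVal k (update (prio e) s)) ∧
           t = (s, e, 2 * k, resetReg k (update (prio e) s))) ∨
        (Odd (regVal k (update (prio e) s)) ∧
           t = (s, e, 2 * k + 1, resetReg k (update (prio e) s)))))}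

/-- States of the safety automaton `S_{n,d}`: `none` is the rejecting state `rej`;
otherwise a state of `R_{n,d}` together with a tuple of counters (bottom first:
`c_0` is the head). -/
abbrev SState : Type := Option (List ℕ × List ℕ)

/-- Counters `c_0,…,c_{k-1}` are reset to `c0`; the rest is kept. -/
def bumpKeep (c0 k : ℕ) (c : List ℕ) : List ℕ := List.replicate k c0 ++ c.drop k

/-- Counters `c_0,…,c_{k-1}` are reset to `c0`; counter `c_k` is decremented. -/
def bumpDec (c0 k : ℕ) (c : List ℕ) : List ℕ :=
  List.replicate k c0 ++ ((c.getD k 0 - 1) :: c.drop (k + 1))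

/-- The safety automaton `S_{n,d}`. -/
def Saut (n d : ℕ) : Automaton SState where
  init := some (List.replicate (rn n) 1, List.replicate (rn n + 1) n)
  trans := {t |
    (∃ e, InAlph n d e ∧ t = (none, e, 1, none)) ∨
    (∃ s c e k s', 1 ≤ k ∧ (s, e, 2 * k, s') ∈ (Raut n d).trans ∧
       t = (some (s, c), e, 2, some (s', bumpKeep n k c))) ∨
    (∃ s c e k s', (s, e, 2 * k + 1, s') ∈ (Raut n d).trans ∧
       ((1 < c.getD k 0 ∧ t = (some (s, c), e, 2, some (s', bumpDec n k c))) ∨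
        (c.getD k 0 = 1 ∧ t = (some (s, c), e, 1, none))))}

/-- `bad(ρ) ≤ B` for an infinite run `ρ`: every infix containing no transition of
priority above an odd `p` contains at most `B` transitions of priority `p`. -/
def badLE {Q : Type*} (ρ : ℕ → Trans Q) (B : ℕ) : Prop :=
  ∀ a b p, Odd p → (∀ i, a ≤ i → i < b → tPrio (ρ i) ≤ p) →
    ((Finset.Ico a b).filter fun i => tPrio (ρ i) = p).card ≤ B

/-- `bad(ρ) ≤ B` for a partial run of length `L` (possibly infinite). -/
def badLEPartial {Q : Type*} (ρ : ℕ → Trans Q) (L : ℕ∞) (B : ℕ) : Prop :=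
  ∀ (a b p : ℕ), Odd p → (b : ℕ∞) ≤ L → (∀ i, a ≤ i → i < b → tPrio (ρ i) ≤ p) →
    ((Finset.Ico a b).filter fun i => tPrio (ρ i) = p).card ≤ B

/-- The strategy subgraph `G_τ`: all outgoing edges of Odd's nodes, and only the
chosen edge from each of Even's nodes. -/
def GtauEdges {n d : ℕ} (G : GameGraph n d) (τ : EPosStrat G) : Set Letter :=
  {e | e ∈ G.edges ∧ (e.1 ∈ G.evenN → e = τ.choice e.1)}

/-- One step along an edge of `E`. -/
def StepRel (E : Set Letter) (u v : ℕ) : Prop := ∃ p, (u, p, v) ∈ E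

/-- Reachability along edges of `E`. -/
def Reach (E : Set Letter) : ℕ → ℕ → Prop := Relation.ReflTransGen (StepRel E)

/-- `V_τ`: the nodes of `G_τ` reachable from the starting node. -/
def Vtau {n d : ℕ} (G : GameGraph n d) (τ : EPosStrat G) : Set ℕ :=
  {v | Reach (GtauEdges G τ) G.start v}

/-- `G_{S,p}`: edges of `E` inside `S` of priority at most `p`. -/
def subEdges (E : Set Letter) (S : Set ℕ) (p : ℕ) : Set Letter :=
  {e | e ∈ E ∧ e.1 ∈ S ∧ e.2.2 ∈ S ∧ prio e ≤ p}

/-- `parts` lists the strongly connected components of the graph `(S, E)` in a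
topological order. -/
def IsSCCDecomp (E : Set Letter) (S : Set ℕ) (parts : List (Set ℕ)) : Prop :=
  (∀ P ∈ parts, P.Nonempty ∧ P ⊆ S) ∧
  (∀ v ∈ S, ∃ P ∈ parts, v ∈ P) ∧
  List.Pairwise Disjoint parts ∧
  (∀ P ∈ parts, ∀ u ∈ P, ∀ v ∈ S, ((Reach E u v ∧ Reach E v u) ↔ v ∈ P)) ∧
  (∀ (i j : ℕ) (hi : i < parts.length) (hj : j < parts.length), i < j →
    ∀ u ∈ parts.get ⟨j, hj⟩, ∀ v ∈ parts.get ⟨i, hi⟩, ¬ StepRel E u v)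

/-- The nodes of a tree given by the children function `ch` with root `(r, R)`. -/
inductive TreeNode (ch : ℕ → Set ℕ → List (Set ℕ)) (r : ℕ) (R : Set ℕ) :
    ℕ → Set ℕ → Prop where
  | root : TreeNode ch r R r R
  | child {k : ℕ} {S T : Set ℕ} : TreeNode ch r R (k + 1) S → T ∈ ch (k + 1) S →
      TreeNode ch r R k T

/-- `ch` describes a game tree of `G_τ`: the root is `(⌈d/2⌉, V_τ)`, and the children
of a node `(k+1, S)` are the SCCs of `G_{S,2(k+1)-1}` in topological order. -/
def IsGameTree {n d : ℕ} (G : GameGraph n d) (τ : EPosStrat G)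
    (ch : ℕ → Set ℕ → List (Set ℕ)) : Prop :=
  ∀ k S, TreeNode ch ((d + 1) / 2) (Vtau G τ) (k + 1) S →
    IsSCCDecomp (subEdges (GtauEdges G τ) S (2 * (k + 1) - 1)) S (ch (k + 1) S)

/-- `fstl ch l k S`: the leftmost descendant of the node `(k, S)` on level `l`
(for `l ≤ k`). -/
def fstl (ch : ℕ → Set ℕ → List (Set ℕ)) (l : ℕ) : ℕ → Set ℕ → Set ℕ
  | 0, S => S
  | k + 1, S => if l = k + 1 then S else fstl ch l k ((ch (k + 1) S).headD ∅)


/-! ### Generic `InfOft` lemmas -/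

def MIO (b : Bool) (f : ℕ → ℕ) : Prop :=
  ∃ p, (if b then Even p else Odd p) ∧ InfOft f p ∧ ∀ q, InfOft f q → q ≤ p

lemma mio_true {f : ℕ → ℕ} : MIO true f ↔ MaxInfOftEven f := Iff.rfl
lemma mio_false {f : ℕ → ℕ} : MIO false f ↔ MaxInfOftOdd f := Iff.rfl

lemma mio_shift {b : Bool} {f : ℕ → ℕ} {m : ℕ} (h : MIO b (fun k => f (m + k))) : MIO b f := by
  obtain ⟨p, hpar, hio, hmax⟩ := h
  refine ⟨p, hpar, ?_, ?_⟩
  · intro N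
    obtain ⟨k, hk, he⟩ := hio N
    exact ⟨m + k, by omega, he⟩
  · intro q hq
    apply hmax
    intro N
    obtain ⟨k, hk, he⟩ := hq (m + N)
    exact ⟨k - m, by omega, by simpa [Nat.add_sub_cancel' (by omega : m ≤ k)] using he⟩

lemma exists_infOft {f : ℕ → ℕ} {B : ℕ} (hB : ∀ k, f k ≤ B) : ∃ q, InfOft f q := by
  by_contra h
  push_neg at h
  simp only [InfOft, not_forall, not_exists, not_and] at h
  choose N hN using h
  set M := (Finset.range (B + 1)).sup N with hM
  have h1 : N (f M) ≤ M := by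
    have : f M ∈ Finset.range (B + 1) := Finset.mem_range.mpr (by have := hB M; omega)
    exact Finset.le_sup this
  exact hN (f M) M h1 rfl

lemma not_even_and_odd {f : ℕ → ℕ} (h1 : MaxInfOftEven f) (h2 : MaxInfOftOdd f) : False := by
  obtain ⟨p, hp, hip, hmp⟩ := h1
  obtain ⟨q, hq, hiq, hmq⟩ := h2
  have : p = q := le_antisymm (hmq p hip) (hmp q hiq)
  subst this
  exact (Nat.not_even_iff_odd.mpr hq) hp

lemma infOft_interleave {g p : ℕ → ℕ} {c : ℕ}
    (hge : ∀ k, g (2 * k) = c) (hgo : ∀ k, g (2 * k + 1) = p k) {q : ℕ} (hq : q ≠ c) :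
    InfOft g q ↔ InfOft p q := by
  constructor
  · intro h N
    obtain ⟨j, hj, he⟩ := h (2 * N + 1)
    rcases Nat.even_or_odd j with ⟨k, hk⟩ | ⟨k, hk⟩
    · exfalso
      rw [show j = 2 * k by omega, hge] at he
      exact hq he.symm
    · rw [show j = 2 * k + 1 by omega, hgo] at he
      exact ⟨k, by omega, he⟩
  · intro h N
    obtain ⟨k, hk, he⟩ := h N
    exact ⟨2 * k + 1, by omega, by rw [hgo]; exact he⟩

/-- interleaving with `1`s, upwards (for building product plays) -/
lemma mio_even_up {g p : ℕ → ℕ}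
    (hge : ∀ k, g (2 * k) = 1) (hgo : ∀ k, g (2 * k + 1) = p k) (hp1 : ∀ k, 1 ≤ p k)
    (h : MaxInfOftEven p) : MaxInfOftEven g := by
  obtain ⟨q, hq, hio, hmax⟩ := h
  have hq1 : 1 ≤ q := by obtain ⟨k, -, hk⟩ := hio 0; rw [← hk]; exact hp1 k
  have hqne : q ≠ 1 := by rintro rfl; simp at hq
  refine ⟨q, hq, (infOft_interleave hge hgo hqne).mpr hio, ?_⟩
  intro r hr
  by_cases hr1 : r = 1
  · omega
  · exact hmax r ((infOft_interleave hge hgo hr1).mp hr)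

/-- interleaving with `1`s, downwards (for decomposing product plays) -/
lemma mio_even_down {g p : ℕ → ℕ}
    (hge : ∀ k, g (2 * k) = 1) (hgo : ∀ k, g (2 * k + 1) = p k) (hp1 : ∀ k, 1 ≤ p k)
    (h : MaxInfOftEven g) : MaxInfOftEven p := by
  obtain ⟨q, hq, hio, hmax⟩ := h
  have hq1 : 1 ≤ q := by
    obtain ⟨j, -, he⟩ := hio 0
    rcases Nat.even_or_odd j with ⟨k, hk⟩ | ⟨k, hk⟩
    · rw [show j = 2 * k by omega, hge] at he; omega
    · rw [show j = 2 * k + 1 by omega, hgo] at he; have := hp1 k; omega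
  have hqne : q ≠ 1 := by rintro rfl; simp at hq
  refine ⟨q, hq, (infOft_interleave hge hgo hqne).mp hio, ?_⟩
  intro r hr
  by_cases hr1 : r = 1
  · omega
  · exact hmax r ((infOft_interleave hge hgo hr1).mpr hr)

/-- interleaving with `0`s, downwards, both parities (for positional determinacy) -/
lemma mio_zero_down {b : Bool} {g p : ℕ → ℕ} {D : ℕ}
    (hge : ∀ k, g (2 * k) = 0) (hgo : ∀ k, g (2 * k + 1) = p k)
    (hp1 : ∀ k, 1 ≤ p k) (hpD : ∀ k, p k ≤ D)
    (h : MIO b g) : MIO b p := by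
  obtain ⟨q, hq, hio, hmax⟩ := h
  obtain ⟨q0, hq0⟩ := exists_infOft hpD
  have hq01 : 1 ≤ q0 := by obtain ⟨k, -, hk⟩ := hq0 0; rw [← hk]; exact hp1 k
  have : q0 ≤ q := hmax q0 ((infOft_interleave hge hgo (by omega)).mpr hq0)
  have hqne : q ≠ 0 := by omega
  refine ⟨q, hq, (infOft_interleave hge hgo hqne).mp hio, ?_⟩
  intro r hr
  have hr1 : 1 ≤ r := by obtain ⟨k, -, hk⟩ := hr 0; rw [← hk]; exact hp1 k
  exact hmax r ((infOft_interleave hge hgo (by omega)).mpr hr)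




section Inner

attribute [local instance] Classical.propDecidable

variable (rel : ℕ → ℕ → Prop) (own : ℕ → Bool) (pr : ℕ → ℕ)

/-- Totality of a finite subgame. -/
def Tot (U : Finset ℕ) : Prop := ∀ v ∈ U, ∃ u ∈ U, rel v u

/-- A play in subgame `U` consistent with `b`'s positional strategy `f`. -/
def Cons (U : Finset ℕ) (b : Bool) (f : ℕ → ℕ) (v : ℕ → ℕ) : Prop :=
  (∀ k, v k ∈ U ∧ rel (v k) (v (k + 1))) ∧ ∀ k, own (v k) = b → v (k + 1) = f (v k)

/-- `f` is a positional strategy winning for `b` on `W` (with step-invariance). -/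
def GoodStrat (U : Finset ℕ) (W : Set ℕ) (b : Bool) (f : ℕ → ℕ) : Prop :=
  (∀ v ∈ W, (own v = b → f v ∈ W ∧ rel v (f v) ∧ f v ∈ U) ∧
    (own v ≠ b → ∀ u ∈ U, rel v u → u ∈ W)) ∧
  ∀ v, Cons rel own U b f v → v 0 ∈ W → MIO b (fun k => pr (v k))

def attrStep (b : Bool) (U : Finset ℕ) (X : Set ℕ) : Set ℕ :=
  X ∪ {v | v ∈ U ∧ ((own v = b ∧ ∃ u ∈ U, rel v u ∧ u ∈ X) ∨
    (own v ≠ b ∧ ∀ u ∈ U, rel v u → u ∈ X))}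

def attrN (b : Bool) (U : Finset ℕ) (T : Set ℕ) : ℕ → Set ℕ
  | 0 => T
  | i + 1 => attrStep rel own b U (attrN b U T i)

def Attr (b : Bool) (U : Finset ℕ) (T : Set ℕ) : Set ℕ := ⋃ i, attrN rel own b U T i

variable {rel : ℕ → ℕ → Prop} {own : ℕ → Bool} {pr : ℕ → ℕ}
variable {b : Bool} {U : Finset ℕ} {T : Set ℕ} {v : ℕ}

lemma attrN_mono_succ (i : ℕ) : attrN rel own b U T i ⊆ attrN rel own b U T (i + 1) :=
  fun _ hx => Or.inl hx

lemma attrN_mono {i j : ℕ} (hij : i ≤ j) : attrN rel own b U T i ⊆ attrN rel own b U T j := by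
  induction j with
  | zero => simpa [Nat.le_zero.mp hij]
  | succ j ih =>
    rcases Nat.lt_or_ge i (j + 1) with h | h
    · exact fun x hx => attrN_mono_succ j (ih (by omega) hx)
    · have : i = j + 1 := by omega
      subst this; exact fun x hx => hx

lemma subset_attr : T ⊆ Attr rel own b U T := fun x hx => Set.mem_iUnion.mpr ⟨0, hx⟩

lemma attr_subset (hTU : T ⊆ ↑U) : Attr rel own b U T ⊆ ↑U := by
  intro x hx
  obtain ⟨i, hi⟩ := Set.mem_iUnion.mp hx
  induction i with
  | zero => exact hTU hi
  | succ i ih =>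
    rcases hi with h | h
    · exact ih h
    · exact Finset.mem_coe.mpr h.1

noncomputable def rank (rel : ℕ → ℕ → Prop) (own : ℕ → Bool)
    (b : Bool) (U : Finset ℕ) (T : Set ℕ) (v : ℕ) : ℕ :=
  if h : v ∈ Attr rel own b U T then Nat.find (Set.mem_iUnion.mp h) else 0

lemma mem_attrN_rank (h : v ∈ Attr rel own b U T) :
    v ∈ attrN rel own b U T (rank rel own b U T v) := by
  rw [rank, dif_pos h]
  exact Nat.find_spec (Set.mem_iUnion.mp h)

lemma rank_le_of_mem {i : ℕ} (hv : v ∈ attrN rel own b U T i) :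
    rank rel own b U T v ≤ i := by
  have h : v ∈ Attr rel own b U T := Set.mem_iUnion.mpr ⟨i, hv⟩
  rw [rank, dif_pos h]
  exact Nat.find_le hv

lemma not_mem_attrN_of_rank {i : ℕ} (hi : i < rank rel own b U T v) :
    v ∉ attrN rel own b U T i :=
  fun h => absurd (rank_le_of_mem h) (by omega)

lemma rank_zero_iff (h : v ∈ Attr rel own b U T) :
    rank rel own b U T v = 0 ↔ v ∈ T := by
  constructor
  · intro h0
    have := mem_attrN_rank h
    rwa [h0] at this
  · intro hT
    exact Nat.le_zero.mp (rank_le_of_mem hT)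

/-- From an attractor node owned by `b` outside the target there is a
rank-decreasing move. -/
lemma attr_move (hv : v ∈ Attr rel own b U T) (hT : v ∉ T) (ho : own v = b) :
    ∃ u ∈ U, rel v u ∧ u ∈ Attr rel own b U T ∧
      rank rel own b U T u < rank rel own b U T v := by
  have hpos : 0 < rank rel own b U T v := by
    rcases Nat.eq_zero_or_pos (rank rel own b U T v) with h0 | h
    · exact absurd ((rank_zero_iff hv).mp h0) hT
    · exact h
  obtain ⟨j, hj⟩ : ∃ j, rank rel own b U T v = j + 1 := ⟨_, (Nat.succ_pred_eq_of_pos hpos).symm⟩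
  have hvi := mem_attrN_rank hv
  rw [hj] at hvi
  have hnot : v ∉ attrN rel own b U T j := not_mem_attrN_of_rank (by omega)
  rcases hvi with h | h
  · exact absurd h hnot
  · rcases h.2 with ⟨-, u, hu, hrel, hmem⟩ | ⟨hne, -⟩
    · exact ⟨u, hu, hrel, Set.mem_iUnion.mpr ⟨j, hmem⟩, by
        have := rank_le_of_mem hmem; omega⟩
    · exact absurd ho hne

/-- From an attractor node not owned by `b`, outside the target, *every* move
decreases the rank. -/
lemma attr_force (hv : v ∈ Attr rel own b U T) (hT : v ∉ T) (ho : own v ≠ b) :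
    ∀ u ∈ U, rel v u → u ∈ Attr rel own b U T ∧
      rank rel own b U T u < rank rel own b U T v := by
  have hpos : 0 < rank rel own b U T v := by
    rcases Nat.eq_zero_or_pos (rank rel own b U T v) with h0 | h
    · exact absurd ((rank_zero_iff hv).mp h0) hT
    · exact h
  obtain ⟨j, hj⟩ : ∃ j, rank rel own b U T v = j + 1 := ⟨_, (Nat.succ_pred_eq_of_pos hpos).symm⟩
  have hvi := mem_attrN_rank hv
  rw [hj] at hvi
  have hnot : v ∉ attrN rel own b U T j := not_mem_attrN_of_rank (by omega)
  rcases hvi with h | h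
  · exact absurd h hnot
  · rcases h.2 with ⟨hb, -⟩ | ⟨-, hall⟩
    · exact absurd hb ho
    · intro u hu hrel
      have := hall u hu hrel
      exact ⟨Set.mem_iUnion.mpr ⟨j, this⟩, by have := rank_le_of_mem this; omega⟩

/-- Closure: a `b`-owned node outside the attractor has no move into it. -/
lemma attr_closed_own (hU : v ∈ U) (hv : v ∉ Attr rel own b U T) (ho : own v = b) :
    ∀ u ∈ U, rel v u → u ∉ Attr rel own b U T := by
  intro u hu hrel hmem
  obtain ⟨i, hi⟩ := Set.mem_iUnion.mp hmem
  exact hv (Set.mem_iUnion.mpr ⟨i + 1, Or.inr ⟨hU, Or.inl ⟨ho, u, hu, hrel, hi⟩⟩⟩)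

/-- Closure: a non-`b`-owned node outside the attractor has some move avoiding it. -/
lemma attr_escape (hU : v ∈ U) (hv : v ∉ Attr rel own b U T) (ho : own v ≠ b) :
    ∃ u ∈ U, rel v u ∧ u ∉ Attr rel own b U T := by
  by_contra h
  push_neg at h
  set S := U.filter (fun u => rel v u) with hS
  set i := S.sup (rank rel own b U T) with hi
  apply hv
  refine Set.mem_iUnion.mpr ⟨i + 1, Or.inr ⟨hU, Or.inr ⟨ho, ?_⟩⟩⟩
  intro u hu hrel
  have hmem : u ∈ Attr rel own b U T := h u hu hrel
  have h1 : u ∈ S := Finset.mem_filter.mpr ⟨hu, hrel⟩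
  exact attrN_mono (Finset.le_sup (f := rank rel own b U T) h1) (mem_attrN_rank hmem)

noncomputable def pick (P : ℕ → Prop) : ℕ := if h : ∃ u, P u then h.choose else 0

lemma pick_spec {P : ℕ → Prop} (h : ∃ u, P u) : P (pick P) := by
  rw [pick, dif_pos h]; exact h.choose_spec

/-- The attractor strategy. -/
noncomputable def aStrat (rel : ℕ → ℕ → Prop) (own : ℕ → Bool)
    (b : Bool) (U : Finset ℕ) (T : Set ℕ) (v : ℕ) : ℕ :=
  pick (fun u => u ∈ U ∧ rel v u ∧ u ∈ Attr rel own b U T ∧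
    rank rel own b U T u < rank rel own b U T v)

lemma aStrat_spec (hv : v ∈ Attr rel own b U T) (hT : v ∉ T) (ho : own v = b) :
    aStrat rel own b U T v ∈ U ∧ rel v (aStrat rel own b U T v) ∧
      aStrat rel own b U T v ∈ Attr rel own b U T ∧
      rank rel own b U T (aStrat rel own b U T v) < rank rel own b U T v := by
  obtain ⟨u, hu, h1, h2, h3⟩ := attr_move hv hT ho
  exact pick_spec (P := fun u => u ∈ U ∧ rel v u ∧ u ∈ Attr rel own b U T ∧
    rank rel own b U T u < rank rel own b U T v) ⟨u, hu, h1, h2, h3⟩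

/-- In a play consistent with a strategy making rank-decreasing moves inside
the attractor, from every attractor position the target is eventually reached. -/
lemma attr_reach {f : ℕ → ℕ} {v : ℕ → ℕ} (hcons : Cons rel own U b f v)
    (hf : ∀ x, x ∈ Attr rel own b U T → x ∉ T → own x = b →
      f x ∈ Attr rel own b U T ∧ rank rel own b U T (f x) < rank rel own b U T x) :
    ∀ k, v k ∈ Attr rel own b U T → ∃ j, k ≤ j ∧ v j ∈ T := by
  intro k hk
  by_cases hT : v k ∈ T
  · exact ⟨k, le_rfl, hT⟩
  · -- strong induction on rank
    have : ∀ r, ∀ k, v k ∈ Attr rel own b U T → rank rel own b U T (v k) ≤ r →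
        ∃ j, k ≤ j ∧ v j ∈ T := by
      intro r
      induction r with
      | zero =>
        intro k hk hr
        exact ⟨k, le_rfl, (rank_zero_iff hk).mp (Nat.le_zero.mp hr)⟩
      | succ r ih =>
        intro k hk hr
        by_cases hT : v k ∈ T
        · exact ⟨k, le_rfl, hT⟩
        · have hnext : v (k + 1) ∈ Attr rel own b U T ∧
              rank rel own b U T (v (k + 1)) < rank rel own b U T (v k) := by
            by_cases ho : own (v k) = b
            · have := hcons.2 k ho
              rw [this]
              exact hf (v k) hk hT ho
            · exact attr_force hk hT ho (v (k + 1)) (hcons.1 (k + 1)).1 (hcons.1 k).2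
          obtain ⟨j, hj1, hj2⟩ := ih (k + 1) hnext.1 (by omega)
          exact ⟨j, by omega, hj2⟩
    exact this (rank rel own b U T (v k)) k hk le_rfl

lemma bool_ne_iff {a c : Bool} : a ≠ c ↔ a = !c := by cases a <;> cases c <;> simp

lemma union_bool {W : Bool → Set ℕ} (σ : Bool) : W σ ∪ W (!σ) = W true ∪ W false := by
  cases σ
  · exact Set.union_comm _ _
  · rfl

end Inner




section InnerDet

attribute [local instance] Classical.propDecidable

variable {rel : ℕ → ℕ → Prop} {own : ℕ → Bool} {pr : ℕ → ℕ}

lemma bool_self_ne : ∀ (c : Bool), c ≠ !c := by decide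

lemma goodStrat_empty (U : Finset ℕ) (b : Bool) (f : ℕ → ℕ) :
    GoodStrat (rel := rel) (own := own) (pr := pr) U ∅ b f :=
  ⟨fun v hv => absurd hv (Set.notMem_empty v),
   fun _ _ h0 => absurd h0 (Set.notMem_empty _)⟩

theorem inner_det (rel : ℕ → ℕ → Prop) (own : ℕ → Bool) (pr : ℕ → ℕ) :
    ∀ (N : ℕ) (U : Finset ℕ), U.card ≤ N → Tot rel U →
    ∃ (W : Bool → Set ℕ) (f : Bool → ℕ → ℕ), (W true ∪ W false = ↑U) ∧
      ∀ b, GoodStrat (rel := rel) (own := own) (pr := pr) U (W b) b (f b) := by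
  intro N
  induction N with
  | zero =>
    intro U hcard _
    have : U = ∅ := Finset.card_eq_zero.mp (Nat.le_zero.mp hcard)
    subst this
    exact ⟨fun _ => ∅, fun _ => id, by simp, fun b => goodStrat_empty _ _ _⟩
  | succ N ih =>
    intro U hcard htot
    rcases U.eq_empty_or_nonempty with rfl | hne
    · exact ⟨fun _ => ∅, fun _ => id, by simp, fun b => goodStrat_empty _ _ _⟩
    obtain ⟨v0, hv0, hv0p⟩ := U.exists_max_image pr hne
    set p := pr v0 with hp
    obtain ⟨σ, hσ_par⟩ : ∃ b : Bool, if b then Even p else Odd p := by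
      rcases Nat.even_or_odd p with h | h
      · exact ⟨true, by simpa⟩
      · exact ⟨false, by simpa⟩
    set T : Set ℕ := {x | x ∈ U ∧ pr x = p} with hTdef
    have hTU : T ⊆ ↑U := fun x hx => hx.1
    set Aσ := Attr rel own σ U T with hAσdef
    have hAσU : Aσ ⊆ ↑U := attr_subset hTU
    set U' := U.filter (fun x => x ∉ Aσ) with hU'def
    have hmemU' : ∀ x, x ∈ U' ↔ x ∈ U ∧ x ∉ Aσ := fun x => Finset.mem_filter
    have htot' : Tot rel U' := by
      intro v hv
      obtain ⟨hvU, hvA⟩ := (hmemU' v).mp hv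
      by_cases ho : own v = σ
      · obtain ⟨u, hu, hrel⟩ := htot v hvU
        exact ⟨u, (hmemU' u).mpr ⟨hu, attr_closed_own hvU hvA ho u hu hrel⟩, hrel⟩
      · obtain ⟨u, hu, hrel, huA⟩ := attr_escape hvU hvA ho
        exact ⟨u, (hmemU' u).mpr ⟨hu, huA⟩, hrel⟩
    have hv0A : v0 ∈ Aσ := subset_attr ⟨hv0, rfl⟩
    have hcard' : U'.card ≤ N := by
      have hss : U' ⊂ U := Finset.filter_ssubset.mpr ⟨v0, hv0, not_not_intro hv0A⟩
      have := Finset.card_lt_card hss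
      omega
    obtain ⟨W', f', hW'u, hW'g⟩ := ih U' hcard' htot'
    have hW'subU' : ∀ bb, W' bb ⊆ ↑U' := by
      intro bb x hx
      rw [← hW'u]
      cases bb
      · exact Or.inr hx
      · exact Or.inl hx
    by_cases hcase : W' (!σ) = ∅
    · -- Case 1 : σ wins everywhere on U
      have hWσU' : W' σ = ↑U' := by
        have h1 : W' σ ∪ W' (!σ) = ↑U' := by rw [union_bool]; exact hW'u
        rw [hcase, Set.union_empty] at h1
        exact h1
      set fσ : ℕ → ℕ := fun v => if v ∈ Aσ then
          (if v ∈ T then pick (fun u => u ∈ U ∧ rel v u) else aStrat rel own σ U T v)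
        else f' σ v with hfσdef
      have hgood : GoodStrat (rel := rel) (own := own) (pr := pr) U (↑U) σ fσ := by
        constructor
        · intro v hv
          have hvU : v ∈ U := Finset.mem_coe.mp hv
          constructor
          · intro ho
            by_cases hA : v ∈ Aσ
            · by_cases hTv : v ∈ T
              · have hspec := pick_spec (P := fun u => u ∈ U ∧ rel v u) (by
                  obtain ⟨u, hu, hrel⟩ := htot v hvU
                  exact ⟨u, hu, hrel⟩)
                simp only [hfσdef, if_pos hA, if_pos hTv]
                exact ⟨Finset.mem_coe.mpr hspec.1, hspec.2, hspec.1⟩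
              · have hspec := aStrat_spec hA hTv ho
                simp only [hfσdef, if_pos hA, if_neg hTv]
                exact ⟨Finset.mem_coe.mpr hspec.1, hspec.2.1, hspec.1⟩
            · have hvU'' : v ∈ U' := (hmemU' v).mpr ⟨hvU, hA⟩
              have hvW : v ∈ W' σ := by rw [hWσU']; exact Finset.mem_coe.mpr hvU''
              obtain ⟨h1, h2, h3⟩ := ((hW'g σ).1 v hvW).1 ho
              simp only [hfσdef, if_neg hA]
              exact ⟨Finset.mem_coe.mpr (Finset.filter_subset _ _ h3), h2,
                Finset.filter_subset _ _ h3⟩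
          · intro _ u hu _
            exact Finset.mem_coe.mpr hu
        · intro v hcons h0
          by_cases hinf : ∀ m, ∃ k, m ≤ k ∧ v k ∈ Aσ
          · refine ⟨p, hσ_par, ?_, ?_⟩
            · intro N0
              obtain ⟨k, hk, hkA⟩ := hinf N0
              obtain ⟨j, hj, hjT⟩ := attr_reach hcons (fun x hx hxT hxo => by
                have hspec := aStrat_spec hx hxT hxo
                have : fσ x = aStrat rel own σ U T x := by
                  simp only [hfσdef, if_pos hx, if_neg hxT]
                  exact if_pos hx
                rw [this]
                exact ⟨hspec.2.2.1, hspec.2.2.2⟩) k hkA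
              exact ⟨j, by omega, hjT.2⟩
            · intro q hq
              obtain ⟨k, -, hk⟩ := hq 0
              rw [← hk]
              exact hv0p (v k) (hcons.1 k).1
          · push_neg at hinf
            obtain ⟨m, hm⟩ := hinf
            have hmA : ∀ k, m ≤ k → v k ∉ Aσ := by
              intro k hk hkA
              exact absurd hkA (hm k hk)
            apply mio_shift (m := m)
            apply (hW'g σ).2 (fun k => v (m + k))
            · constructor
              · intro k
                exact ⟨(hmemU' _).mpr ⟨(hcons.1 (m + k)).1, hmA (m + k) (by omega)⟩,
                  (hcons.1 (m + k)).2⟩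
              · intro k ho
                have := hcons.2 (m + k) ho
                have hnA : v (m + k) ∉ Aσ := hmA (m + k) (by omega)
                simp only [hfσdef, if_neg hnA] at this
                exact this
            · show v (m + 0) ∈ W' σ
              rw [hWσU']
              exact Finset.mem_coe.mpr ((hmemU' _).mpr ⟨(hcons.1 m).1, hmA m le_rfl⟩)
      refine ⟨fun bb => if bb = σ then ↑U else ∅, fun bb => if bb = σ then fσ else id, ?_, ?_⟩
      · cases σ
        · simp only [Bool.true_eq_false, if_neg, if_pos]
          simp
        · simp only [Bool.false_eq_true, if_pos, if_neg]
          simp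
      · intro bb
        by_cases hbb : bb = σ
        · subst hbb
          simpa only [if_pos rfl, ↓reduceIte] using hgood
        · simp only [if_neg hbb]
          exact goodStrat_empty _ _ _
    · -- Case 2 : recurse after removing the opponent's attractor
      set B := Attr rel own (!σ) U (W' (!σ)) with hBdef
      have hW'B : W' (!σ) ⊆ B := subset_attr
      have hW'Ucoe : W' (!σ) ⊆ ↑U := fun x hx =>
        Finset.mem_coe.mpr (Finset.filter_subset _ _ (Finset.mem_coe.mp (hW'subU' _ hx)))
      have hBU : B ⊆ ↑U := attr_subset hW'Ucoe
      set U'' := U.filter (fun x => x ∉ B) with hU''def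
      have hmemU'' : ∀ x, x ∈ U'' ↔ x ∈ U ∧ x ∉ B := fun x => Finset.mem_filter
      have htot'' : Tot rel U'' := by
        intro v hv
        obtain ⟨hvU, hvB⟩ := (hmemU'' v).mp hv
        by_cases ho : own v = !σ
        · obtain ⟨u, hu, hrel⟩ := htot v hvU
          exact ⟨u, (hmemU'' u).mpr ⟨hu, attr_closed_own hvU hvB ho u hu hrel⟩, hrel⟩
        · obtain ⟨u, hu, hrel, huB⟩ := attr_escape hvU hvB ho
          exact ⟨u, (hmemU'' u).mpr ⟨hu, huB⟩, hrel⟩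
      obtain ⟨x0, hx0⟩ := Set.nonempty_iff_ne_empty.mpr hcase
      have hcard'' : U''.card ≤ N := by
        have hss : U'' ⊂ U := Finset.filter_ssubset.mpr
          ⟨x0, Finset.mem_coe.mp (hW'Ucoe hx0), not_not_intro (hW'B hx0)⟩
        have := Finset.card_lt_card hss
        omega
      obtain ⟨W'', f'', hW''u, hW''g⟩ := ih U'' hcard'' htot''
      have hW''subU'' : ∀ bb, W'' bb ⊆ ↑U'' := by
        intro bb x hx
        rw [← hW''u]
        cases bb
        · exact Or.inr hx
        · exact Or.inl hx
      -- step-stay inside W' (!σ) against σ's moves in the full game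
      have s1 : ∀ v ∈ W' (!σ), own v = σ → ∀ u ∈ U, rel v u → u ∈ W' (!σ) := by
        intro v hv ho u hu hrel
        obtain ⟨hvU, hvA⟩ := (hmemU' v).mp (Finset.mem_coe.mp (hW'subU' _ hv))
        have huA : u ∉ Aσ := attr_closed_own hvU hvA ho u hu hrel
        have hne : own v ≠ !σ := by rw [ho]; exact bool_self_ne σ
        exact ((hW'g (!σ)).1 v hv).2 hne u ((hmemU' u).mpr ⟨hu, huA⟩) hrel
      set fb : ℕ → ℕ := fun v => if v ∈ B then
          (if v ∈ W' (!σ) then f' (!σ) v else aStrat rel own (!σ) U (W' (!σ)) v)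
        else f'' (!σ) v with hfbdef
      have hgoodσ : GoodStrat (rel := rel) (own := own) (pr := pr) U (W'' σ) σ (f'' σ) := by
        constructor
        · intro v hv
          constructor
          · intro ho
            obtain ⟨h1, h2, h3⟩ := ((hW''g σ).1 v hv).1 ho
            exact ⟨h1, h2, Finset.filter_subset _ _ h3⟩
          · intro ho u hu hrel
            obtain ⟨hvU, hvB⟩ := (hmemU'' v).mp (Finset.mem_coe.mp (hW''subU'' σ hv))
            have ho' : own v = !σ := bool_ne_iff.mp ho
            have huB : u ∉ B := attr_closed_own hvU hvB ho' u hu hrel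
            exact ((hW''g σ).1 v hv).2 ho u ((hmemU'' u).mpr ⟨hu, huB⟩) hrel
        · intro v hcons h0
          have hstay : ∀ k, v k ∈ W'' σ := by
            intro k
            induction k with
            | zero => exact h0
            | succ k ihk =>
              by_cases ho : own (v k) = σ
              · rw [hcons.2 k ho]
                exact (((hW''g σ).1 _ ihk).1 ho).1
              · obtain ⟨hvU, hvB⟩ := (hmemU'' _).mp (Finset.mem_coe.mp (hW''subU'' σ ihk))
                have ho' : own (v k) = !σ := bool_ne_iff.mp ho
                have huB : v (k + 1) ∉ B :=
                  attr_closed_own hvU hvB ho' _ (hcons.1 (k + 1)).1 (hcons.1 k).2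
                exact ((hW''g σ).1 _ ihk).2 ho _
                  ((hmemU'' _).mpr ⟨(hcons.1 (k + 1)).1, huB⟩) (hcons.1 k).2
          apply (hW''g σ).2 v ?_ h0
          exact ⟨fun k => ⟨Finset.mem_coe.mp (hW''subU'' σ (hstay k)), (hcons.1 k).2⟩,
            hcons.2⟩
      have hgoodτ : GoodStrat (rel := rel) (own := own) (pr := pr) U (B ∪ W'' (!σ)) (!σ) fb := by
        constructor
        · intro v hv
          constructor
          · intro ho
            by_cases hvB : v ∈ B
            · by_cases hvW' : v ∈ W' (!σ)
              · obtain ⟨h1, h2, h3⟩ := ((hW'g (!σ)).1 v hvW').1 ho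
                simp only [hfbdef, if_pos hvB, if_pos hvW']
                exact ⟨Or.inl (hW'B h1), h2, Finset.filter_subset _ _ h3⟩
              · have hspec := aStrat_spec hvB hvW' ho
                simp only [hfbdef, if_pos hvB, if_neg hvW']
                exact ⟨Or.inl hspec.2.2.1, hspec.2.1, hspec.1⟩
            · have hvW'' : v ∈ W'' (!σ) := hv.resolve_left hvB
              obtain ⟨h1, h2, h3⟩ := ((hW''g (!σ)).1 v hvW'').1 ho
              simp only [hfbdef, if_neg hvB]
              exact ⟨Or.inr h1, h2, Finset.filter_subset _ _ h3⟩
          · intro ho u hu hrel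
            have hoσ : own v = σ := by
              have := bool_ne_iff.mp ho
              simpa using this
            by_cases hvB : v ∈ B
            · by_cases hvW' : v ∈ W' (!σ)
              · exact Or.inl (hW'B (s1 v hvW' hoσ u hu hrel))
              · exact Or.inl (attr_force hvB hvW' ho u hu hrel).1
            · have hvW'' : v ∈ W'' (!σ) := hv.resolve_left hvB
              by_cases huB : u ∈ B
              · exact Or.inl huB
              · exact Or.inr (((hW''g (!σ)).1 v hvW'').2 ho u
                  ((hmemU'' u).mpr ⟨hu, huB⟩) hrel)
        · intro v hcons h0
          have hW'stay : ∀ k, v k ∈ W' (!σ) → v (k + 1) ∈ W' (!σ) := by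
            intro k hk
            by_cases ho : own (v k) = !σ
            · rw [hcons.2 k ho]
              simp only [hfbdef, if_pos (hW'B hk), if_pos hk]
              exact (((hW'g (!σ)).1 _ hk).1 ho).1
            · have hoσ : own (v k) = σ := by
                have := bool_ne_iff.mp ho
                simpa using this
              exact s1 _ hk hoσ _ (hcons.1 (k + 1)).1 (hcons.1 k).2
          by_cases hB0 : ∃ m, v m ∈ B
          · obtain ⟨m, hm⟩ := hB0
            obtain ⟨j, hj, hjW⟩ := attr_reach (T := W' (!σ)) hcons (fun x hx hxT hxo => by
              have hspec := aStrat_spec hx hxT hxo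
              have : fb x = aStrat rel own (!σ) U (W' (!σ)) x := by
                simp only [hfbdef, if_pos hx, if_neg hxT]
                exact if_pos hx
              rw [this]
              exact ⟨hspec.2.2.1, hspec.2.2.2⟩) m hm
            have htail : ∀ k, v (j + k) ∈ W' (!σ) := by
              intro k
              induction k with
              | zero => exact hjW
              | succ k ihk => exact hW'stay (j + k) ihk
            apply mio_shift (m := j)
            apply (hW'g (!σ)).2 (fun k => v (j + k)) ?_ (htail 0)
            constructor
            · intro k
              exact ⟨Finset.mem_coe.mp (hW'subU' _ (htail k)), (hcons.1 (j + k)).2⟩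
            · intro k ho
              have heq := hcons.2 (j + k) ho
              simp only [hfbdef, if_pos (hW'B (htail k)), if_pos (htail k)] at heq
              exact heq
          · push_neg at hB0
            have h0'' : v 0 ∈ W'' (!σ) := h0.resolve_left (hB0 0)
            have hstay : ∀ k, v k ∈ W'' (!σ) := by
              intro k
              induction k with
              | zero => exact h0''
              | succ k ihk =>
                by_cases ho : own (v k) = !σ
                · rw [hcons.2 k ho]
                  simp only [hfbdef, if_neg (hB0 k)]
                  exact (((hW''g (!σ)).1 _ ihk).1 ho).1
                · exact ((hW''g (!σ)).1 _ ihk).2 ho _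
                    ((hmemU'' _).mpr ⟨(hcons.1 (k + 1)).1, hB0 (k + 1)⟩) (hcons.1 k).2
            apply (hW''g (!σ)).2 v ?_ h0''
            constructor
            · intro k
              exact ⟨Finset.mem_coe.mp (hW''subU'' _ (hstay k)), (hcons.1 k).2⟩
            · intro k ho
              have heq := hcons.2 k ho
              simp only [hfbdef, if_neg (hB0 k)] at heq
              exact heq
      have key : W'' σ ∪ (B ∪ W'' (!σ)) = ↑U := by
        rw [Set.union_comm B, ← Set.union_assoc, union_bool (W := W''), hW''u]
        ext x
        constructor
        · rintro (hx | hx)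
          · exact Finset.mem_coe.mpr (Finset.filter_subset _ _ (Finset.mem_coe.mp hx))
          · exact hBU hx
        · intro hx
          by_cases hxB : x ∈ B
          · exact Or.inr hxB
          · exact Or.inl (Finset.mem_coe.mpr ((hmemU'' x).mpr ⟨Finset.mem_coe.mp hx, hxB⟩))
      refine ⟨fun bb => if bb = σ then W'' σ else B ∪ W'' (!σ),
        fun bb => if bb = σ then f'' σ else fb, ?_, ?_⟩
      · cases σ
        · simpa [Set.union_comm] using key
        · simpa using key
      · intro bb
        by_cases hbb : bb = σ
        · subst hbb
          simpa only [if_pos rfl, ↓reduceIte] using hgoodσ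
        · have hbb' : bb = !σ := by
            cases bb <;> cases σ <;> simp_all
          subst hbb'
          simpa only [if_neg hbb] using hgoodτ

end InnerDet




section Posdet

attribute [local instance] Classical.propDecidable

abbrev NL : Type := ℕ ⊕ Letter

noncomputable def enc (x : NL) : ℕ := Encodable.encode x
noncomputable def dec (a : ℕ) : Option NL := Encodable.decode a

lemma dec_enc (x : NL) : dec (enc x) = some x := Encodable.encodek x

lemma enc_inj : Function.Injective enc := Encodable.encode_injective

variable {n d : ℕ}

def gStep (G : GameGraph n d) : NL → NL → Prop
  | Sum.inl u, Sum.inr e => e ∈ G.edges ∧ e.1 = u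
  | Sum.inr e, Sum.inl v => e ∈ G.edges ∧ e.2.2 = v
  | _, _ => False

def gRel (G : GameGraph n d) (a b : ℕ) : Prop :=
  ∃ x y, dec a = some x ∧ dec b = some y ∧ gStep G x y

noncomputable def gOwn (G : GameGraph n d) (a : ℕ) : Bool :=
  match dec a with
  | some (Sum.inl v) => decide (v ∈ G.evenN)
  | _ => false

noncomputable def gPr (a : ℕ) : ℕ :=
  match dec a with
  | some (Sum.inr e) => prio e
  | _ => 0

lemma edges_finite (G : GameGraph n d) : G.edges.Finite := by
  apply Set.Finite.subset (Set.finite_Icc (1, 1, 1) (n, d, n))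
  intro e he
  obtain ⟨h1, h2, h3, h4, h5, h6⟩ := G.edges_alph e he
  constructor
  · exact ⟨h1, h3, h5⟩
  · exact ⟨h2, h4, h6⟩

noncomputable def gU (G : GameGraph n d) : Finset ℕ :=
  ((Finset.Icc 1 n).image fun v => enc (Sum.inl v)) ∪
    ((edges_finite G).toFinset.image fun e => enc (Sum.inr e))

lemma mem_gU_inl {G : GameGraph n d} {v : ℕ} (hv : v ∈ Set.Icc 1 n) :
    enc (Sum.inl v) ∈ gU G := by
  apply Finset.mem_union_left
  exact Finset.mem_image.mpr ⟨v, by simpa using hv, rfl⟩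

lemma mem_gU_inr {G : GameGraph n d} {e : Letter} (he : e ∈ G.edges) :
    enc (Sum.inr e) ∈ gU G := by
  apply Finset.mem_union_right
  exact Finset.mem_image.mpr ⟨e, by simpa using he, rfl⟩

lemma mem_gU_elim {G : GameGraph n d} {a : ℕ} (ha : a ∈ gU G) :
    (∃ v, v ∈ Set.Icc 1 n ∧ a = enc (Sum.inl v)) ∨
      (∃ e, e ∈ G.edges ∧ a = enc (Sum.inr e)) := by
  rcases Finset.mem_union.mp ha with h | h
  · obtain ⟨v, hv, he⟩ := Finset.mem_image.mp h
    exact Or.inl ⟨v, by simpa using hv, he.symm⟩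
  · obtain ⟨e, he, hee⟩ := Finset.mem_image.mp h
    exact Or.inr ⟨e, by simpa using he, hee.symm⟩

lemma gRel_enc {G : GameGraph n d} {x y : NL} :
    gRel G (enc x) (enc y) ↔ gStep G x y := by
  constructor
  · rintro ⟨x', y', hx, hy, hst⟩
    rw [dec_enc] at hx hy
    cases hx
    cases hy
    exact hst
  · intro h
    exact ⟨x, y, dec_enc x, dec_enc y, h⟩

lemma gRel_enc_inl_elim {G : GameGraph n d} {v : ℕ} {b : ℕ} (h : gRel G (enc (Sum.inl v)) b)
    (hb : b ∈ gU G) : ∃ e, e ∈ G.edges ∧ e.1 = v ∧ b = enc (Sum.inr e) := by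
  rcases mem_gU_elim hb with ⟨u, hu, rfl⟩ | ⟨e, he, rfl⟩
  · obtain ⟨x, y, hx, hy, hst⟩ := h
    rw [dec_enc] at hx hy
    cases hx; cases hy
    exact absurd hst (by simp [gStep])
  · obtain ⟨x, y, hx, hy, hst⟩ := h
    rw [dec_enc] at hx hy
    cases hx; cases hy
    exact ⟨e, hst.1, hst.2, rfl⟩

lemma gRel_enc_inr_elim {G : GameGraph n d} {e : Letter} {b : ℕ}
    (h : gRel G (enc (Sum.inr e)) b) (hb : b ∈ gU G) :
    e ∈ G.edges ∧ b = enc (Sum.inl e.2.2) := by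
  rcases mem_gU_elim hb with ⟨u, hu, rfl⟩ | ⟨e', he', rfl⟩
  · obtain ⟨x, y, hx, hy, hst⟩ := h
    rw [dec_enc] at hx hy
    cases hx; cases hy
    exact ⟨hst.1, by rw [hst.2]⟩
  · obtain ⟨x, y, hx, hy, hst⟩ := h
    rw [dec_enc] at hx hy
    cases hx; cases hy
    exact absurd hst (by simp [gStep])

lemma gOwn_inl {G : GameGraph n d} (v : ℕ) :
    gOwn G (enc (Sum.inl v)) = decide (v ∈ G.evenN) := by
  rw [gOwn, dec_enc]

lemma gOwn_inr {G : GameGraph n d} (e : Letter) : gOwn G (enc (Sum.inr e)) = false := by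
  rw [gOwn, dec_enc]

lemma gPr_inl (v : ℕ) : gPr (enc (Sum.inl v)) = 0 := by rw [gPr, dec_enc]

lemma gPr_inr (e : Letter) : gPr (enc (Sum.inr e)) = prio e := by rw [gPr, dec_enc]

lemma gTot (G : GameGraph n d) : Tot (gRel G) (gU G) := by
  intro a ha
  rcases mem_gU_elim ha with ⟨v, hv, rfl⟩ | ⟨e, he, rfl⟩
  · obtain ⟨e, he, hsrc⟩ := G.total v hv
    exact ⟨enc (Sum.inr e), mem_gU_inr he, gRel_enc.mpr ⟨he, hsrc⟩⟩
  · have h2 : e.2.2 ∈ Set.Icc 1 n := by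
      obtain ⟨-, -, -, -, h5, h6⟩ := G.edges_alph e he
      exact ⟨h5, h6⟩
    exact ⟨enc (Sum.inl e.2.2), mem_gU_inl h2, gRel_enc.mpr ⟨he, rfl⟩⟩

/-- **Positional determinacy** for game graphs. -/
theorem posdet (G : GameGraph n d) :
    (∃ τ : EPosStrat G, EWinningPos τ) ∨ (∃ τ : OPosStrat G, OWinningPos τ) := by
  obtain ⟨W, f, hWu, hWg⟩ :=
    inner_det (gRel G) (gOwn G) gPr (gU G).card (gU G) le_rfl (gTot G)
  have hstart : enc (Sum.inl G.start) ∈ gU G := mem_gU_inl G.start_mem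
  have hstart' : enc (Sum.inl G.start) ∈ W true ∪ W false := by
    rw [hWu]
    exact Finset.mem_coe.mpr hstart
  -- successor extraction at an Even/Odd-owned `inl` node inside a winning region
  have evenStep : ∀ v, v ∈ G.evenN → enc (Sum.inl v) ∈ W true →
      ∃ e, e ∈ G.edges ∧ e.1 = v ∧ f true (enc (Sum.inl v)) = enc (Sum.inr e) ∧
        enc (Sum.inr e) ∈ W true := by
    intro v hv hW
    have ho : gOwn G (enc (Sum.inl v)) = true := by
      rw [gOwn_inl]
      exact decide_eq_true hv
    obtain ⟨h1, h2, h3⟩ := ((hWg true).1 _ hW).1 ho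
    obtain ⟨e, he, hsrc, heq⟩ := gRel_enc_inl_elim h2 h3
    exact ⟨e, he, hsrc, heq, heq ▸ h1⟩
  have oddStep : ∀ v, v ∈ G.oddN → enc (Sum.inl v) ∈ W false →
      ∃ e, e ∈ G.edges ∧ e.1 = v ∧ f false (enc (Sum.inl v)) = enc (Sum.inr e) ∧
        enc (Sum.inr e) ∈ W false := by
    intro v hv hW
    have hnv : v ∉ G.evenN := Set.disjoint_right.mp G.disj hv
    have ho : gOwn G (enc (Sum.inl v)) = false := by
      rw [gOwn_inl]
      exact decide_eq_false hnv
    obtain ⟨h1, h2, h3⟩ := ((hWg false).1 _ hW).1 ho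
    obtain ⟨e, he, hsrc, heq⟩ := gRel_enc_inl_elim h2 h3
    exact ⟨e, he, hsrc, heq, heq ▸ h1⟩
  rcases hstart' with hsW | hsW
  · -- Even wins positionally
    left
    set τc : ℕ → Letter := fun v => if h : v ∈ G.evenN ∧ enc (Sum.inl v) ∈ W true then
      (evenStep v h.1 h.2).choose else
      (if h2 : ∃ e, e ∈ G.edges ∧ e.1 = v then h2.choose else (1, 1, 1)) with hτc
    refine ⟨⟨τc, ?_⟩, ?_⟩
    · intro v hv
      by_cases h : v ∈ G.evenN ∧ enc (Sum.inl v) ∈ W true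
      · obtain ⟨he, hsrc, -, -⟩ := (evenStep v h.1 h.2).choose_spec
        simp only [hτc, dif_pos h]
        exact ⟨he, hsrc⟩
      · have h2 : ∃ e, e ∈ G.edges ∧ e.1 = v := by
          obtain ⟨e, he, hsrc⟩ := G.total v (by rw [← G.union_eq]; exact Or.inl hv)
          exact ⟨e, he, hsrc⟩
        simp only [hτc, dif_neg h, dif_pos h2]
        exact h2.choose_spec
    · -- winning
      intro w hw
      obtain ⟨⟨hw0, hwpath⟩, hwcons⟩ := hw
      have hsW0 : enc (Sum.inl ((w 0).1)) ∈ W true := by rw [hw0]; exact hsW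
      -- the lifted play stays in W true
      have stay : ∀ j, enc (Sum.inl ((w j).1)) ∈ W true ∧ enc (Sum.inr (w j)) ∈ W true := by
        have stepInr : ∀ j, enc (Sum.inl ((w j).1)) ∈ W true → enc (Sum.inr (w j)) ∈ W true := by
          intro j hj
          by_cases hev : (w j).1 ∈ G.evenN
          · obtain ⟨he, hsrc, heq, hmem⟩ := (evenStep _ hev hj).choose_spec
            have hpair : (w j).1 ∈ G.evenN ∧ enc (Sum.inl ((w j).1)) ∈ W true := ⟨hev, hj⟩
            have hcw : w j = τc ((w j).1) := hwcons j hev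
            simp only [hτc] at hcw
            rw [dif_pos hpair] at hcw
            rw [hcw]
            exact hmem
          · have ho : gOwn G (enc (Sum.inl ((w j).1))) ≠ true := by
              rw [gOwn_inl]
              simp [hev]
            apply ((hWg true).1 _ hj).2 ho
            · exact mem_gU_inr (hwpath j).1
            · exact gRel_enc.mpr ⟨(hwpath j).1, rfl⟩
        intro j
        induction j with
        | zero => exact ⟨hsW0, stepInr 0 hsW0⟩
        | succ j ihj =>
          have hnext : enc (Sum.inl ((w (j + 1)).1)) ∈ W true := by
            have ho : gOwn G (enc (Sum.inr (w j))) ≠ true := by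
              rw [gOwn_inr]; simp
            apply ((hWg true).1 _ ihj.2).2 ho
            · refine mem_gU_inl ?_
              obtain ⟨-, -, -, -, h5, h6⟩ := G.edges_alph _ (hwpath j).1
              rw [← (hwpath j).2]
              exact ⟨h5, h6⟩
            · exact gRel_enc.mpr ⟨(hwpath j).1, (hwpath j).2⟩
          exact ⟨hnext, stepInr (j + 1) hnext⟩
      -- the inner play
      set vs : ℕ → ℕ := fun k => if k % 2 = 0 then enc (Sum.inl ((w (k / 2)).1))
        else enc (Sum.inr (w (k / 2))) with hvs
      have hvse : ∀ j, vs (2 * j) = enc (Sum.inl ((w j).1)) := by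
        intro j
        have h1 : (2 * j) % 2 = 0 := by omega
        have h2 : 2 * j / 2 = j := by omega
        simp only [hvs, h1, h2, if_pos]
      have hvso : ∀ j, vs (2 * j + 1) = enc (Sum.inr (w j)) := by
        intro j
        have h1 : (2 * j + 1) % 2 = 1 := by omega
        have h2 : (2 * j + 1) / 2 = j := by omega
        simp only [hvs, h1, h2]
        norm_num
      have hconsv : Cons (gRel G) (gOwn G) (gU G) true (f true) vs := by
        constructor
        · intro k
          rcases Nat.even_or_odd k with ⟨j, hj⟩ | ⟨j, hj⟩
          · have hk : k = 2 * j := by omega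
            subst hk
            constructor
            · rw [hvse]
              refine mem_gU_inl ?_
              obtain ⟨h1, h2, -⟩ := G.edges_alph _ (hwpath j).1
              exact ⟨h1, h2⟩
            · rw [hvse, hvso]
              exact gRel_enc.mpr ⟨(hwpath j).1, rfl⟩
          · have hk : k = 2 * j + 1 := by omega
            subst hk
            constructor
            · rw [hvso]
              exact mem_gU_inr (hwpath j).1
            · rw [hvso, show 2 * j + 1 + 1 = 2 * (j + 1) from by omega, hvse]
              exact gRel_enc.mpr ⟨(hwpath j).1, (hwpath j).2⟩
        · intro k ho
          rcases Nat.even_or_odd k with ⟨j, hj⟩ | ⟨j, hj⟩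
          · have hk : k = 2 * j := by omega
            subst hk
            rw [hvse, gOwn_inl] at ho
            have hev : (w j).1 ∈ G.evenN := of_decide_eq_true ho
            obtain ⟨he, hsrc, heq, hmem⟩ := (evenStep _ hev (stay j).1).choose_spec
            have hpair : (w j).1 ∈ G.evenN ∧ enc (Sum.inl ((w j).1)) ∈ W true :=
              ⟨hev, (stay j).1⟩
            have hcw : w j = τc ((w j).1) := hwcons j hev
            simp only [hτc] at hcw
            rw [dif_pos hpair] at hcw
            rw [hvso, hvse, heq]
            exact congrArg (fun e => enc (Sum.inr e)) hcw
          · have hk : k = 2 * j + 1 := by omega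
            subst hk
            rw [hvso, gOwn_inr] at ho
            simp at ho
      have hstart0 : vs 0 ∈ W true := by
        rw [show (0 : ℕ) = 2 * 0 from rfl, hvse]
        exact hsW0
      have hmio := (hWg true).2 vs hconsv hstart0
      have hge : ∀ k, (fun k => gPr (vs k)) (2 * k) = 0 := by
        intro k
        simp only [hvse, gPr_inl]
      have hgo : ∀ k, (fun k => gPr (vs k)) (2 * k + 1) = prio (w k) := by
        intro k
        simp only [hvso, gPr_inr]
      have hp1 : ∀ k, 1 ≤ prio (w k) := fun k => (G.edges_alph _ (hwpath k).1).2.2.1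
      have hpD : ∀ k, prio (w k) ≤ d := fun k => (G.edges_alph _ (hwpath k).1).2.2.2.1
      exact mio_true.mp (mio_zero_down hge hgo hp1 hpD hmio)
  · -- Odd wins positionally
    right
    set τc : ℕ → Letter := fun v => if h : v ∈ G.oddN ∧ enc (Sum.inl v) ∈ W false then
      (oddStep v h.1 h.2).choose else
      (if h2 : ∃ e, e ∈ G.edges ∧ e.1 = v then h2.choose else (1, 1, 1)) with hτc
    refine ⟨⟨τc, ?_⟩, ?_⟩
    · intro v hv
      by_cases h : v ∈ G.oddN ∧ enc (Sum.inl v) ∈ W false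
      · obtain ⟨he, hsrc, -, -⟩ := (oddStep v h.1 h.2).choose_spec
        simp only [hτc, dif_pos h]
        exact ⟨he, hsrc⟩
      · have h2 : ∃ e, e ∈ G.edges ∧ e.1 = v := by
          obtain ⟨e, he, hsrc⟩ := G.total v (by rw [← G.union_eq]; exact Or.inr hv)
          exact ⟨e, he, hsrc⟩
        simp only [hτc, dif_neg h, dif_pos h2]
        exact h2.choose_spec
    · -- winning
      intro w hw
      obtain ⟨⟨hw0, hwpath⟩, hwcons⟩ := hw
      have hsW0 : enc (Sum.inl ((w 0).1)) ∈ W false := by rw [hw0]; exact hsW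
      have stay : ∀ j, enc (Sum.inl ((w j).1)) ∈ W false ∧ enc (Sum.inr (w j)) ∈ W false := by
        have stepInr : ∀ j, enc (Sum.inl ((w j).1)) ∈ W false →
            enc (Sum.inr (w j)) ∈ W false := by
          intro j hj
          by_cases hod : (w j).1 ∈ G.oddN
          · obtain ⟨he, hsrc, heq, hmem⟩ := (oddStep _ hod hj).choose_spec
            have hpair : (w j).1 ∈ G.oddN ∧ enc (Sum.inl ((w j).1)) ∈ W false := ⟨hod, hj⟩
            have hcw : w j = τc ((w j).1) := hwcons j hod
            simp only [hτc] at hcw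
            rw [dif_pos hpair] at hcw
            rw [hcw]
            exact hmem
          · have hev : (w j).1 ∈ G.evenN := by
              have h1 : (w j).1 ∈ Set.Icc 1 n := by
                obtain ⟨h1, h2, -⟩ := G.edges_alph _ (hwpath j).1
                exact ⟨h1, h2⟩
              rw [← G.union_eq] at h1
              exact h1.resolve_right hod
            have ho : gOwn G (enc (Sum.inl ((w j).1))) ≠ false := by
              rw [gOwn_inl]
              simp [hev]
            apply ((hWg false).1 _ hj).2 ho
            · exact mem_gU_inr (hwpath j).1
            · exact gRel_enc.mpr ⟨(hwpath j).1, rfl⟩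
        intro j
        induction j with
        | zero => exact ⟨hsW0, stepInr 0 hsW0⟩
        | succ j ihj =>
          have hnext : enc (Sum.inl ((w (j + 1)).1)) ∈ W false := by
            -- Odd owns the `inr` node, so it follows its own strategy there,
            -- but the successor is forced
            have ho : gOwn G (enc (Sum.inr (w j))) = false := gOwn_inr _
            obtain ⟨h1, h2, h3⟩ := ((hWg false).1 _ ihj.2).1 ho
            obtain ⟨-, heq⟩ := gRel_enc_inr_elim h2 h3
            rw [heq] at h1
            rw [← (hwpath j).2]
            exact h1
          exact ⟨hnext, stepInr (j + 1) hnext⟩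
      set vs : ℕ → ℕ := fun k => if k % 2 = 0 then enc (Sum.inl ((w (k / 2)).1))
        else enc (Sum.inr (w (k / 2))) with hvs
      have hvse : ∀ j, vs (2 * j) = enc (Sum.inl ((w j).1)) := by
        intro j
        have h1 : (2 * j) % 2 = 0 := by omega
        have h2 : 2 * j / 2 = j := by omega
        simp only [hvs, h1, h2, if_pos]
      have hvso : ∀ j, vs (2 * j + 1) = enc (Sum.inr (w j)) := by
        intro j
        have h1 : (2 * j + 1) % 2 = 1 := by omega
        have h2 : (2 * j + 1) / 2 = j := by omega
        simp only [hvs, h1, h2]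
        norm_num
      have hconsv : Cons (gRel G) (gOwn G) (gU G) false (f false) vs := by
        constructor
        · intro k
          rcases Nat.even_or_odd k with ⟨j, hj⟩ | ⟨j, hj⟩
          · have hk : k = 2 * j := by omega
            subst hk
            constructor
            · rw [hvse]
              refine mem_gU_inl ?_
              obtain ⟨h1, h2, -⟩ := G.edges_alph _ (hwpath j).1
              exact ⟨h1, h2⟩
            · rw [hvse, hvso]
              exact gRel_enc.mpr ⟨(hwpath j).1, rfl⟩
          · have hk : k = 2 * j + 1 := by omega
            subst hk
            constructor
            · rw [hvso]
              exact mem_gU_inr (hwpath j).1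
            · rw [hvso, show 2 * j + 1 + 1 = 2 * (j + 1) from by omega, hvse]
              exact gRel_enc.mpr ⟨(hwpath j).1, (hwpath j).2⟩
        · intro k ho
          rcases Nat.even_or_odd k with ⟨j, hj⟩ | ⟨j, hj⟩
          · have hk : k = 2 * j := by omega
            subst hk
            rw [hvse, gOwn_inl] at ho
            have hnev : (w j).1 ∉ G.evenN := of_decide_eq_false ho
            have hod : (w j).1 ∈ G.oddN := by
              have h1 : (w j).1 ∈ Set.Icc 1 n := by
                obtain ⟨h1, h2, -⟩ := G.edges_alph _ (hwpath j).1
                exact ⟨h1, h2⟩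
              rw [← G.union_eq] at h1
              exact h1.resolve_left hnev
            obtain ⟨he, hsrc, heq, hmem⟩ := (oddStep _ hod (stay j).1).choose_spec
            have hpair : (w j).1 ∈ G.oddN ∧ enc (Sum.inl ((w j).1)) ∈ W false :=
              ⟨hod, (stay j).1⟩
            have hcw : w j = τc ((w j).1) := hwcons j hod
            simp only [hτc] at hcw
            rw [dif_pos hpair] at hcw
            rw [hvso, hvse, heq]
            exact congrArg (fun e => enc (Sum.inr e)) hcw
          · have hk : k = 2 * j + 1 := by omega
            subst hk
            rw [hvso]
            -- forced move at the `inr` node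
            obtain ⟨h1, h2, h3⟩ := ((hWg false).1 _ (stay j).2).1 (gOwn_inr _)
            obtain ⟨-, heq⟩ := gRel_enc_inr_elim h2 h3
            rw [show 2 * j + 1 + 1 = 2 * (j + 1) from by omega, hvse, heq, (hwpath j).2]
      have hstart0 : vs 0 ∈ W false := by
        rw [show (0 : ℕ) = 2 * 0 from rfl, hvse]
        exact hsW0
      have hmio := (hWg false).2 vs hconsv hstart0
      have hge : ∀ k, (fun k => gPr (vs k)) (2 * k) = 0 := by
        intro k
        simp only [hvse, gPr_inl]
      have hgo : ∀ k, (fun k => gPr (vs k)) (2 * k + 1) = prio (w k) := by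
        intro k
        simp only [hvso, gPr_inr]
      have hp1 : ∀ k, 1 ≤ prio (w k) := fun k => (G.edges_alph _ (hwpath k).1).2.2.1
      have hpD : ∀ k, prio (w k) ≤ d := fun k => (G.edges_alph _ (hwpath k).1).2.2.2.1
      have hodd := mio_false.mp (mio_zero_down hge hgo hp1 hpD hmio)
      exact fun hLE => not_even_and_odd hLE hodd

end Posdet




/-! ### Finite path utilities -/

def epl {V : Type*} (s : V) (l : List (V × ℕ × V)) : V :=
  match l.getLast? with
  | some e => e.2.2
  | none => s

@[simp] lemma epl_nil {V : Type*} (s : V) : epl s ([] : List (V × ℕ × V)) = s := rfl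

@[simp] lemma epl_concat {V : Type*} (s : V) (l : List (V × ℕ × V)) (e : V × ℕ × V) :
    epl s (l ++ [e]) = e.2.2 := by
  simp [epl, List.getLast?_concat]

lemma isFinPath_snoc {V : Type*} {E : Set (V × ℕ × V)} :
    ∀ (l : List (V × ℕ × V)) (s v : V) (e : V × ℕ × V),
      IsFinPath E s (l ++ [e]) v ↔ ∃ u, IsFinPath E s l u ∧ e ∈ E ∧ e.1 = u ∧ e.2.2 = v := by
  intro l
  induction l with
  | nil =>
    intro s v e
    constructor
    · rintro ⟨h1, h2, h3⟩
      exact ⟨s, rfl, h1, h2, h3⟩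
    · rintro ⟨u, hu, h1, h2, h3⟩
      exact ⟨h1, by rw [hu]; exact h2, h3⟩
  | cons f l ih =>
    intro s v e
    constructor
    · rintro ⟨h1, h2, h3⟩
      obtain ⟨u, hu, h4, h5, h6⟩ := (ih f.2.2 v e).mp h3
      exact ⟨u, ⟨h1, h2, hu⟩, h4, h5, h6⟩
    · rintro ⟨u, ⟨h1, h2, hu⟩, h4, h5, h6⟩
      exact ⟨h1, h2, (ih f.2.2 v e).mpr ⟨u, hu, h4, h5, h6⟩⟩

lemma isFinPath_snoc_intro {V : Type*} {E : Set (V × ℕ × V)} {l : List (V × ℕ × V)}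
    {s u : V} {e : V × ℕ × V} (h : IsFinPath E s l u) (he : e ∈ E) (hsrc : e.1 = u) :
    IsFinPath E s (l ++ [e]) e.2.2 :=
  (isFinPath_snoc l s e.2.2 e).mpr ⟨u, h, he, hsrc, rfl⟩

lemma isFinPath_epl {V : Type*} {E : Set (V × ℕ × V)} (l : List (V × ℕ × V)) :
    ∀ (s v : V), IsFinPath E s l v → epl s l = v := by
  induction l using List.reverseRecOn with
  | nil => intro s v h; exact h
  | append_singleton l e ih =>
    intro s v h
    obtain ⟨u, -, -, -, h4⟩ := (isFinPath_snoc l s v e).mp h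
    rw [epl_concat]
    exact h4

lemma isFinPath_last {V : Type*} {E : Set (V × ℕ × V)} (l : List (V × ℕ × V)) :
    ∀ (s v : V), IsFinPath E s l v → l ≠ [] → ∃ ed, ed ∈ E ∧ ed.2.2 = v := by
  induction l using List.reverseRecOn with
  | nil => intro s v _ h; exact absurd rfl h
  | append_singleton l e _ =>
    intro s v h _
    obtain ⟨u, -, h2, -, h4⟩ := (isFinPath_snoc l s v e).mp h
    exact ⟨e, h2, h4⟩

lemma range_map_succ {V : Type*} (w : ℕ → V) (k : ℕ) :
    (List.range (k + 1)).map w = (List.range k).map w ++ [w k] := by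
  rw [List.range_succ, List.map_append, List.map_singleton]

lemma play_finpath {V : Type*} {E : Set (V × ℕ × V)} {s : V} {w : ℕ → V × ℕ × V}
    (h0 : (w 0).1 = s) (hp : IsPathSeq E w) :
    ∀ k, IsFinPath E s ((List.range k).map w) ((w k).1) := by
  intro k
  induction k with
  | zero =>
    show IsFinPath E s [] ((w 0).1)
    exact h0.symm
  | succ k ih =>
    rw [range_map_succ]
    have := isFinPath_snoc_intro ih (hp k).1 rfl
    rwa [(hp k).2] at this

/-! ### Positional strategies give history strategies -/

lemma epos_to_evenwins {n d : ℕ} {G : GameGraph n d} (τ : EPosStrat G)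
    (h : EWinningPos τ) : EvenWins G.toPGame := by
  refine ⟨fun l => τ.choice (epl G.start l), ?_, ?_⟩
  · intro l v hl hv
    show τ.choice (epl G.start l) ∈ G.edges ∧ (τ.choice (epl G.start l)).1 = v
    rw [isFinPath_epl l G.start v hl]
    exact τ.mem v hv
  · intro w hw hcons
    apply h w
    refine ⟨hw, ?_⟩
    intro k hk
    have h1 : w k = τ.choice (epl G.start ((List.range k).map w)) := hcons k hk
    have h2 : epl G.start ((List.range k).map w) = (w k).1 :=
      isFinPath_epl _ _ _ (play_finpath hw.1 hw.2 k)
    rw [h2] at h1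
    exact h1

/-! ### Building a play consistent with an Even history strategy and an Odd
positional strategy simultaneously -/

def histf (stepf : List Letter → Letter) : ℕ → List Letter
  | 0 => []
  | k + 1 => histf stepf k ++ [stepf (histf stepf k)]

lemma build_play {n d : ℕ} {G : GameGraph n d} (str : List Letter → Letter)
    (hstr : ∀ l v, IsFinPath G.edges G.start l v → v ∈ G.evenN →
      str l ∈ G.edges ∧ (str l).1 = v)
    (τ' : OPosStrat G) :
    ∃ w : Word, IsPlay G w ∧
      (∀ k, (w k).1 ∈ G.evenN → w k = str ((List.range k).map w)) ∧ ArisesO τ' w := by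
  classical
  set stepf : List Letter → Letter := fun l =>
    if epl G.start l ∈ G.oddN then τ'.choice (epl G.start l) else str l with hstepf
  set w : Word := fun k => stepf (histf stepf k) with hwdef
  have hist_succ : ∀ k, histf stepf (k + 1) = histf stepf k ++ [w k] := fun k => rfl
  have inv : ∀ k, IsFinPath G.edges G.start (histf stepf k) (epl G.start (histf stepf k)) ∧
      epl G.start (histf stepf k) ∈ Set.Icc 1 n := by
    intro k
    induction k with
    | zero => exact ⟨rfl, G.start_mem⟩
    | succ k ih =>
      have hwk : w k ∈ G.edges ∧ (w k).1 = epl G.start (histf stepf k) := by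
        by_cases ho : epl G.start (histf stepf k) ∈ G.oddN
        · have hm := τ'.mem _ ho
          rw [hwdef]
          simp only [hstepf, if_pos ho]
          rw [if_pos (by simpa only [hstepf] using ho)]
          simpa only [hstepf] using hm
        · have hu : epl G.start (histf stepf k) ∈ G.evenN := by
            have := ih.2
            rw [← G.union_eq] at this
            exact this.resolve_right ho
          have hm := hstr _ _ ih.1 hu
          rw [hwdef]
          simp only [hstepf, if_neg ho]
          rw [if_neg (by simpa only [hstepf] using ho)]
          simpa only [hstepf] using hm
      constructor
      · rw [hist_succ, epl_concat]
        exact isFinPath_snoc_intro ih.1 hwk.1 hwk.2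
      · rw [hist_succ, epl_concat]
        obtain ⟨-, -, -, -, h5, h6⟩ := G.edges_alph _ hwk.1
        exact ⟨h5, h6⟩
  have hwk : ∀ k, w k ∈ G.edges ∧ (w k).1 = epl G.start (histf stepf k) := by
    intro k
    by_cases ho : epl G.start (histf stepf k) ∈ G.oddN
    · have hm := τ'.mem _ ho
      rw [hwdef]
      simp only [hstepf, if_pos ho]
      rw [if_pos (by simpa only [hstepf] using ho)]
      simpa only [hstepf] using hm
    · have hu : epl G.start (histf stepf k) ∈ G.evenN := by
        have := (inv k).2
        rw [← G.union_eq] at this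
        exact this.resolve_right ho
      have hm := hstr _ _ (inv k).1 hu
      rw [hwdef]
      simp only [hstepf, if_neg ho]
      rw [if_neg (by simpa only [hstepf] using ho)]
      simpa only [hstepf] using hm
  have hrange : ∀ k, (List.range k).map w = histf stepf k := by
    intro k
    induction k with
    | zero => rfl
    | succ k ih => rw [range_map_succ, ih, hist_succ]
  have h0 : (w 0).1 = G.start := (hwk 0).2
  have hpath : IsPathSeq G.edges w := by
    intro k
    refine ⟨(hwk k).1, ?_⟩
    have := (hwk (k + 1)).2
    rw [hist_succ, epl_concat] at this
    exact this.symm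
  refine ⟨w, ⟨h0, hpath⟩, ?_, ⟨h0, hpath⟩, ?_⟩
  · intro k hk
    have ho : epl G.start (histf stepf k) ∉ G.oddN := by
      rw [← (hwk k).2]
      exact Set.disjoint_left.mp G.disj hk
    rw [hrange]
    conv_lhs => rw [hwdef]
    simp only [hstepf, if_neg ho]
    rw [if_neg (by simpa only [hstepf] using ho)]
  · intro k hk
    have ho : epl G.start (histf stepf k) ∈ G.oddN := by
      rw [← (hwk k).2]
      exact hk
    rw [(hwk k).2]
    conv_lhs => rw [hwdef]
    simp only [hstepf, if_pos ho]
    rw [if_pos (by simpa only [hstepf] using ho)]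




section Product

variable {n d : ℕ} {Q : Type}

abbrev PN (Q : Type) : Type := (ℕ ⊕ Letter) × Q
abbrev PE (Q : Type) : Type := PN Q × ℕ × PN Q

def wordOf (L : List (PE Q)) : List Letter :=
  L.filterMap fun ed => Sum.elim (fun _ => none) (fun e => some e) ed.1.1

lemma wordOf_append (L1 L2 : List (PE Q)) :
    wordOf (L1 ++ L2) = wordOf L1 ++ wordOf L2 := by
  simp [wordOf, List.filterMap_append]

lemma wordOf_single_inl {ed : PE Q} {u : ℕ} {s : Q} (h : ed.1 = (Sum.inl u, s)) :
    wordOf [ed] = [] := by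
  simp [wordOf, h]

lemma wordOf_single_inr {ed : PE Q} {e : Letter} {s : Q} (h : ed.1 = (Sum.inr e, s)) :
    wordOf [ed] = [e] := by
  simp [wordOf, h]

lemma prod_start (G : GameGraph n d) (A : Automaton Q) :
    (prodGame G A).start = (Sum.inl G.start, A.init) := rfl

/-- Forward direction: Even's positional winning strategy plus an SFPG
transition strategy yield a winning strategy in the product game. -/
theorem forward_product (G : GameGraph n d) (A : Automaton Q) (d' : ℕ)
    (hA : IsParityAutomaton n d d' A) (τ : EPosStrat G) (σ : TransStrat n d A)
    (hσ : WinningFor A σ {w | ArisesE τ w}) : EvenWins (prodGame G A) := by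
  classical
  set pg := prodGame G A with hpg
  set Str : List (PE Q) → PE Q := fun L =>
    Sum.elim
      (fun v => ((Sum.inl v, (epl pg.start L).2), 1, (Sum.inr (τ.choice v), (epl pg.start L).2)))
      (fun e => ((Sum.inr e, (epl pg.start L).2), tPrio (σ.app (wordOf L) (epl pg.start L).2 e),
        (Sum.inl e.2.2, tTgt (σ.app (wordOf L) (epl pg.start L).2 e))))
      (epl pg.start L).1 with hStr
  have edge_mem_inr : ∀ (L : List (PE Q)) (e : Letter) (s : Q), e ∈ G.edges →
      epl pg.start L = (Sum.inr e, s) →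
      Str L = ((Sum.inr e, s), tPrio (σ.app (wordOf L) s e),
        (Sum.inl e.2.2, tTgt (σ.app (wordOf L) s e))) ∧ Str L ∈ pg.edges := by
    intro L e s he hend
    have halph : InAlph n d e := G.edges_alph e he
    obtain ⟨hmem, hsrc, hlet⟩ := σ.valid (wordOf L) s e halph
    have hshape : Str L = ((Sum.inr e, s), tPrio (σ.app (wordOf L) s e),
        (Sum.inl e.2.2, tTgt (σ.app (wordOf L) s e))) := by
      simp only [hStr, hend, Sum.elim_inr]
    refine ⟨hshape, ?_⟩
    rw [hshape]
    refine Or.inr ⟨σ.app (wordOf L) s e, hmem, ?_, ?_⟩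
    · rw [hlet]; exact he
    · rw [hlet, hsrc]
  have edge_mem_inl : ∀ (L : List (PE Q)) (v : ℕ) (s : Q), v ∈ G.evenN →
      epl pg.start L = (Sum.inl v, s) →
      Str L = ((Sum.inl v, s), 1, (Sum.inr (τ.choice v), s)) ∧ Str L ∈ pg.edges := by
    intro L v s hv hend
    obtain ⟨he, hsrc⟩ := τ.mem v hv
    have hshape : Str L = ((Sum.inl v, s), 1, (Sum.inr (τ.choice v), s)) := by
      simp only [hStr, hend, Sum.elim_inl]
    refine ⟨hshape, ?_⟩
    rw [hshape]
    exact Or.inl ⟨τ.choice v, he, s, by rw [hsrc]⟩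
  refine ⟨Str, ?_, ?_⟩
  · -- validity
    intro L v hL hv
    have hend : epl pg.start L = v := isFinPath_epl L pg.start v hL
    obtain ⟨x, s⟩ := v
    cases x with
    | inl u =>
      have hu : u ∈ G.evenN := hv
      obtain ⟨hshape, hmem⟩ := edge_mem_inl L u s hu hend
      exact ⟨hmem, by rw [hshape]⟩
    | inr e =>
      have hL0 : L ≠ [] := by
        rintro rfl
        rw [epl_nil] at hend
        have hst : pg.start = (Sum.inl G.start, A.init) := rfl
        rw [hst] at hend
        simp at hend
      obtain ⟨ed, hed, hedt⟩ := isFinPath_last L pg.start _ hL hL0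
      have he : e ∈ G.edges := by
        rcases hed with ⟨e', he', s', heq⟩ | ⟨t, ht, hte, heq⟩
        · rw [heq] at hedt
          simp only [Prod.mk.injEq, Sum.inr.injEq] at hedt
          rw [← hedt.1]
          exact he'
        · rw [heq] at hedt
          simp at hedt
      obtain ⟨hshape, hmem⟩ := edge_mem_inr L e s he hend
      exact ⟨hmem, by rw [hshape]⟩
  · -- winning
    intro W hplay hcons
    obtain ⟨hW0, hWpath⟩ := hplay
    set w : Word := fun k => Sum.elim (fun _ => ((1, 1, 1) : Letter)) id ((W (2 * k)).2.2.1)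
      with hw
    set st : ℕ → Q := fun k => (W (2 * k)).1.2 with hstdef
    have step : ∀ k u s, (W (2 * k)).1 = (Sum.inl u, s) →
        ∃ e t, W (2 * k) = ((Sum.inl u, s), 1, (Sum.inr e, s)) ∧ e ∈ G.edges ∧ e.1 = u ∧
          t ∈ A.trans ∧ tLetter t = e ∧ tSrc t = s ∧
          W (2 * k + 1) = ((Sum.inr e, s), tPrio t, (Sum.inl e.2.2, tTgt t)) ∧
          (W (2 * k + 1 + 1)).1 = (Sum.inl e.2.2, tTgt t) := by
      intro k u s hsrc
      rcases (hWpath (2 * k)).1 with ⟨e, he, s', heq⟩ | ⟨t, ht, hte, heq⟩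
      swap
      · rw [heq] at hsrc
        simp at hsrc
      have h1 : (W (2 * k)).1 = (Sum.inl e.1, s') := by rw [heq]
      rw [hsrc] at h1
      simp only [Prod.mk.injEq, Sum.inl.injEq] at h1
      obtain ⟨hu, hs⟩ := h1
      subst hu
      subst hs
      have hW1src : (W (2 * k + 1)).1 = (Sum.inr e, s) := by
        rw [← (hWpath (2 * k)).2, heq]
      rcases (hWpath (2 * k + 1)).1 with ⟨e2, he2, s2, heq2⟩ | ⟨t, ht, hte, heq2⟩
      · rw [heq2] at hW1src
        simp at hW1src
      have h2 : (W (2 * k + 1)).1 = (Sum.inr (tLetter t), tSrc t) := by rw [heq2]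
      rw [hW1src] at h2
      simp only [Prod.mk.injEq, Sum.inr.injEq] at h2
      obtain ⟨het, hst'⟩ := h2
      rw [← het, ← hst'] at heq2
      refine ⟨e, t, heq, he, rfl, ht, het.symm, hst'.symm, heq2, ?_⟩
      rw [← (hWpath (2 * k + 1)).2, heq2]
    have hsrcInl : ∀ k, ∃ u s, (W (2 * k)).1 = (Sum.inl u, s) := by
      intro k
      induction k with
      | zero => exact ⟨G.start, A.init, hW0⟩
      | succ k ih =>
        obtain ⟨u, s, hs⟩ := ih
        obtain ⟨e, t, -, -, -, -, -, -, -, hlast⟩ := step k u s hs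
        exact ⟨e.2.2, tTgt t, by rw [show 2 * (k + 1) = 2 * k + 1 + 1 by ring]; exact hlast⟩
    have facts : ∀ k, W (2 * k) = ((Sum.inl ((w k).1), st k), 1, (Sum.inr (w k), st k)) ∧
        w k ∈ G.edges ∧
        ∃ t, t ∈ A.trans ∧ tLetter t = w k ∧ tSrc t = st k ∧
          W (2 * k + 1) = ((Sum.inr (w k), st k), tPrio t, (Sum.inl ((w k).2.2), tTgt t)) := by
      intro k
      obtain ⟨u, s, hs⟩ := hsrcInl k
      obtain ⟨e, t, h1, h2, h3, h4, h5, h6, h7, h8⟩ := step k u s hs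
      have hwk : w k = e := by
        rw [hw]
        simp only [h1]
        rfl
      have hstk : st k = s := by rw [hstdef]; simp only [hs]
      refine ⟨?_, hwk ▸ h2, t, h4, by rw [h5, hwk], by rw [h6, hstk], ?_⟩
      · rw [hwk, hstk, h3]
        exact h1
      · rw [hwk, hstk]
        exact h7
    have hst_succ : ∀ k, st (k + 1) = (W (2 * k + 1)).2.2.2 := by
      intro k
      rw [hstdef]
      simp only
      rw [show 2 * (k + 1) = 2 * k + 1 + 1 by ring, ← (hWpath (2 * k + 1)).2]
    have hw_succ : ∀ k, (w (k + 1)).1 = (w k).2.2 := by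
      intro k
      obtain ⟨-, -, t, -, -, -, h7⟩ := facts k
      have h8 : (W (2 * k + 1 + 1)).1 = (Sum.inl ((w k).2.2), tTgt t) := by
        rw [← (hWpath (2 * k + 1)).2, h7]
      have h9 : (W (2 * (k + 1))).1 = (Sum.inl ((w (k + 1)).1), st (k + 1)) :=
        congrArg Prod.fst (facts (k + 1)).1
      rw [show 2 * (k + 1) = 2 * k + 1 + 1 by ring] at h9
      rw [h9] at h8
      simp only [Prod.mk.injEq, Sum.inl.injEq] at h8
      exact h8.1
    have hw0 : (w 0).1 = G.start := by
      have h9 : (W (2 * 0)).1 = (Sum.inl ((w 0).1), st 0) := congrArg Prod.fst (facts 0).1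
      have h10 : (W 0).1 = ((Sum.inl G.start : ℕ ⊕ Letter), A.init) := hW0
      rw [show 2 * 0 = 0 by ring, h10] at h9
      simp only [Prod.mk.injEq, Sum.inl.injEq] at h9
      exact h9.1.symm
    have hst0 : st 0 = A.init := by
      rw [hstdef]
      simp only [show 2 * 0 = 0 by ring]
      rw [hW0]
      rfl
    have eplW : ∀ m, epl pg.start ((List.range m).map W) = (W m).1 := by
      intro m
      induction m with
      | zero => exact hW0.symm
      | succ m _ => rw [range_map_succ, epl_concat, (hWpath m).2]
    have hodd : ∀ k, W (2 * k + 1) = Str ((List.range (2 * k + 1)).map W) := by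
      intro k
      apply hcons
      obtain ⟨-, -, t, -, -, -, h7⟩ := facts k
      have hsrc1 : (W (2 * k + 1)).1 = (Sum.inr (w k), st k) := congrArg Prod.fst h7
      rw [hsrc1]
      exact trivial
    have hword : ∀ k, wordOf ((List.range (2 * k)).map W) = (List.range k).map w ∧
        wordOf ((List.range (2 * k + 1)).map W) = (List.range k).map w := by
      intro k
      induction k with
      | zero =>
        constructor
        · rfl
        · have h1 : (List.range (2 * 0 + 1)).map W = ([] : List (PE Q)) ++ [W 0] := by
            rw [show 2 * 0 + 1 = 0 + 1 by ring, range_map_succ]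
            rfl
          rw [h1, wordOf_append,
            wordOf_single_inl (u := G.start) (s := A.init) hW0]
          rfl
      | succ k ih =>
        obtain ⟨-, -, t, -, -, -, h7⟩ := facts k
        have ha : wordOf ((List.range (2 * (k + 1))).map W) = (List.range (k + 1)).map w := by
          rw [show 2 * (k + 1) = (2 * k + 1) + 1 by ring, range_map_succ, wordOf_append,
            ih.2, wordOf_single_inr (e := w k) (s := st k) (congrArg Prod.fst h7),
            ← range_map_succ]
        refine ⟨ha, ?_⟩
        rw [range_map_succ, wordOf_append, ha,
          wordOf_single_inl (u := (w (k + 1)).1) (s := st (k + 1))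
            (congrArg Prod.fst (facts (k + 1)).1), List.append_nil]
    have hstate : ∀ k, st k = stateAt A σ w k := by
      intro k
      induction k with
      | zero => rw [hst0]; rfl
      | succ k ih =>
        obtain ⟨-, -, t, -, -, -, hW1⟩ := facts k
        have hsrc1 : epl pg.start ((List.range (2 * k + 1)).map W) = (Sum.inr (w k), st k) := by
          rw [eplW]
          exact congrArg Prod.fst hW1
        have hShape : Str ((List.range (2 * k + 1)).map W) =
            ((Sum.inr (w k), st k), tPrio (σ.app ((List.range k).map w) (st k) (w k)),
             (Sum.inl ((w k).2.2), tTgt (σ.app ((List.range k).map w) (st k) (w k)))) := by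
          simp only [hStr, hsrc1, Sum.elim_inr, (hword k).2]
        rw [hst_succ k, hodd k, hShape]
        show tTgt (σ.app ((List.range k).map w) (st k) (w k)) = stateAt A σ w (k + 1)
        rw [ih]
        rfl
    have hShapeF : ∀ k, Str ((List.range (2 * k + 1)).map W) =
        ((Sum.inr (w k), st k), tPrio (followRun A σ w k),
         (Sum.inl ((w k).2.2), tTgt (followRun A σ w k))) := by
      intro k
      obtain ⟨-, -, t, -, -, -, hW1⟩ := facts k
      have hsrc1 : epl pg.start ((List.range (2 * k + 1)).map W) = (Sum.inr (w k), st k) := by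
        rw [eplW]
        exact congrArg Prod.fst hW1
      have : followRun A σ w k = σ.app ((List.range k).map w) (st k) (w k) := by
        rw [followRun, hstate k]
      rw [this]
      simp only [hStr, hsrc1, Sum.elim_inr, (hword k).2]
    have hprio : ∀ k, (W (2 * k + 1)).2.1 = tPrio (followRun A σ w k) := by
      intro k
      rw [hodd k, hShapeF k]
    have hAE : ArisesE τ w := by
      refine ⟨⟨hw0, fun k => ⟨(facts k).2.1, (hw_succ k).symm⟩⟩, ?_⟩
      intro k hk
      have hsrcK : (W (2 * k)).1 = (Sum.inl ((w k).1), st k) := congrArg Prod.fst (facts k).1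
      have hcons2k := hcons (2 * k) (by rw [hsrcK]; exact hk)
      have hend : epl pg.start ((List.range (2 * k)).map W) = (Sum.inl ((w k).1), st k) := by
        rw [eplW]
        exact hsrcK
      obtain ⟨hshape, -⟩ := edge_mem_inl _ _ _ hk hend
      rw [hshape, (facts k).1] at hcons2k
      simp only [Prod.mk.injEq, Sum.inr.injEq] at hcons2k
      exact hcons2k.2.2.1
    have hacc := hσ w hAE
    apply mio_even_up (p := fun k => tPrio (followRun A σ w k))
    · intro k
      rw [(facts k).1]
    · intro k
      exact hprio k
    · intro k
      have hm := (σ.valid ((List.range k).map w) (stateAt A σ w k) (w k)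
        (G.edges_alph _ (facts k).2.1)).1
      exact (hA.1 _ hm).2.1
    · exact hacc

end Product




section Backward

variable {n d : ℕ} {Q : Type}

/-- Backward direction: from a winning strategy in the product game, Even gets a
history strategy in `G` all of whose consistent plays are accepted by `A`. -/
theorem backward_product (G : GameGraph n d) (A : Automaton Q) (d' : ℕ)
    (hA : IsParityAutomaton n d d' A) (h : EvenWins (prodGame G A)) :
    ∃ str : List Letter → Letter,
      (∀ l v, IsFinPath G.edges G.start l v → v ∈ G.evenN →
        str l ∈ G.edges ∧ (str l).1 = v) ∧
      ∀ w : Word, IsPlay G w →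
        (∀ k, (w k).1 ∈ G.evenN → w k = str ((List.range k).map w)) → w ∈ Lang A := by
  classical
  obtain ⟨StrP, hv, hwin⟩ := h
  set pg := prodGame G A with hpg
  set nextE : List (PE Q) → Letter → PE Q := fun L e =>
    Sum.elim (fun u => ((Sum.inl u, (epl pg.start L).2), 1, (Sum.inr e, (epl pg.start L).2)))
      (fun _ => StrP L) (epl pg.start L).1 with hnextE
  set step2 : List (PE Q) → Letter → List (PE Q) := fun L e =>
    (L ++ [nextE L e]) ++ [StrP (L ++ [nextE L e])] with hstep2
  set liftH : List Letter → List (PE Q) := fun l => l.foldl step2 [] with hliftH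
  have lift_snoc : ∀ l e, liftH (l ++ [e]) = step2 (liftH l) e := by
    intro l e
    simp [hliftH, List.foldl_append]
  set str : List Letter → Letter := fun l =>
    Sum.elim (fun _ => ((1, 1, 1) : Letter)) id ((StrP (liftH l)).2.2.1) with hstr
  -- shapes of StrP's moves
  have strP_inl : ∀ (L : List (PE Q)) (v : ℕ) (s : Q), v ∈ G.evenN →
      IsFinPath pg.edges pg.start L (Sum.inl v, s) →
      ∃ e, e ∈ G.edges ∧ e.1 = v ∧ StrP L = ((Sum.inl v, s), 1, (Sum.inr e, s)) ∧
        StrP L ∈ pg.edges := by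
    intro L v s hv' hL
    have hOwn : pg.evenOwn (Sum.inl v, s) := hv'
    obtain ⟨hmem, hsrc⟩ := hv L (Sum.inl v, s) hL hOwn
    rcases hmem with ⟨e, he, s', heq⟩ | ⟨t, ht, hte, heq⟩
    · have h1 : (StrP L).1 = (Sum.inl e.1, s') := by rw [heq]
      rw [hsrc] at h1
      simp only [Prod.mk.injEq, Sum.inl.injEq] at h1
      obtain ⟨h2, h3⟩ := h1
      refine ⟨e, he, h2.symm, ?_, by rw [heq]; exact Or.inl ⟨e, he, s', rfl⟩⟩
      rw [heq, h2, h3]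
    · have h1 : (StrP L).1 = (Sum.inr (tLetter t), tSrc t) := by rw [heq]
      rw [hsrc] at h1
      simp at h1
  have strP_inr : ∀ (L : List (PE Q)) (e : Letter) (s : Q),
      IsFinPath pg.edges pg.start L (Sum.inr e, s) →
      ∃ t, t ∈ A.trans ∧ tLetter t = e ∧ tSrc t = s ∧
        StrP L = ((Sum.inr e, s), tPrio t, (Sum.inl e.2.2, tTgt t)) ∧
        StrP L ∈ pg.edges := by
    intro L e s hL
    have hOwn : pg.evenOwn (Sum.inr e, s) := trivial
    obtain ⟨hmem, hsrc⟩ := hv L (Sum.inr e, s) hL hOwn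
    rcases hmem with ⟨e', he', s', heq⟩ | ⟨t, ht, hte, heq⟩
    · have h1 : (StrP L).1 = (Sum.inl e'.1, s') := by rw [heq]
      rw [hsrc] at h1
      simp at h1
    · have h1 : (StrP L).1 = (Sum.inr (tLetter t), tSrc t) := by rw [heq]
      rw [hsrc] at h1
      simp only [Prod.mk.injEq, Sum.inr.injEq] at h1
      obtain ⟨h2, h3⟩ := h1
      refine ⟨t, ht, h2.symm, h3.symm, ?_, by rw [heq]; exact Or.inr ⟨t, ht, hte, rfl⟩⟩
      rw [heq, h2, h3]
  -- lifting finite paths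
  have liftInv : ∀ (l : List Letter) (v : ℕ), IsFinPath G.edges G.start l v →
      ∃ s, IsFinPath pg.edges pg.start (liftH l) (Sum.inl v, s) := by
    intro l
    induction l using List.reverseRecOn with
    | nil =>
      intro v hl
      refine ⟨A.init, ?_⟩
      show IsFinPath pg.edges pg.start [] (Sum.inl v, A.init)
      show pg.start = (Sum.inl v, A.init)
      rw [← hl]
      rfl
    | append_singleton l e ih =>
      intro v hl
      obtain ⟨u, hlu, he, hsrc, htgt⟩ := (isFinPath_snoc l G.start v e).mp hl
      obtain ⟨s, hs⟩ := ih u hlu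
      have hend : epl pg.start (liftH l) = (Sum.inl u, s) := isFinPath_epl _ _ _ hs
      have hne : nextE (liftH l) e = ((Sum.inl u, s), 1, (Sum.inr e, s)) := by
        simp only [hnextE, hend, Sum.elim_inl]
      have hne_mem : nextE (liftH l) e ∈ pg.edges := by
        rw [hne]
        exact Or.inl ⟨e, he, s, by rw [hsrc]⟩
      have hpath1 : IsFinPath pg.edges pg.start (liftH l ++ [nextE (liftH l) e])
          (Sum.inr e, s) := by
        have h2 := isFinPath_snoc_intro hs hne_mem
          (show (nextE (liftH l) e).1 = (Sum.inl u, s) by rw [hne])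
        rwa [show (nextE (liftH l) e).2.2 = (Sum.inr e, s) by rw [hne]] at h2
      obtain ⟨t, ht, hlte, hlts, hshape, hmem⟩ := strP_inr _ e s hpath1
      refine ⟨tTgt t, ?_⟩
      rw [lift_snoc]
      simp only [hstep2]
      have h3 := isFinPath_snoc_intro hpath1 hmem
        (show (StrP (liftH l ++ [nextE (liftH l) e])).1 = (Sum.inr e, s) by rw [hshape])
      rwa [show (StrP (liftH l ++ [nextE (liftH l) e])).2.2 = (Sum.inl v, tTgt t) by
        rw [hshape, htgt]] at h3
  -- validity of the derived strategy
  have hstrval : ∀ l v, IsFinPath G.edges G.start l v → v ∈ G.evenN →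
      str l ∈ G.edges ∧ (str l).1 = v := by
    intro l v hl hv'
    obtain ⟨s, hpath⟩ := liftInv l v hl
    obtain ⟨e, he, hsrc, hshape, -⟩ := strP_inl (liftH l) v s hv' hpath
    have hse : str l = e := by
      rw [hstr]
      simp only [hshape]
      rfl
    rw [hse]
    exact ⟨he, hsrc⟩
  refine ⟨str, hstrval, ?_⟩
  -- every consistent play is accepted
  intro w hw hcons
  obtain ⟨hw0, hwpath⟩ := hw
  set F : ℕ → List (PE Q) := fun k => liftH ((List.range k).map w) with hF
  set st : ℕ → Q := fun k => (epl pg.start (F k)).2 with hstdef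
  have hFpath : ∀ k, IsFinPath pg.edges pg.start (F k) (Sum.inl ((w k).1), st k) := by
    intro k
    obtain ⟨s, hp⟩ := liftInv _ _ (play_finpath hw0 hwpath k)
    have he := isFinPath_epl _ _ _ hp
    have hss : st k = s := by rw [hstdef]; simp only [hF]; rw [he]
    rw [hss]
    exact hp
  have hFend : ∀ k, epl pg.start (F k) = (Sum.inl ((w k).1), st k) := by
    intro k
    exact isFinPath_epl _ _ _ (hFpath k)
  set W : ℕ → PE Q := fun j => if j % 2 = 0 then nextE (F (j / 2)) (w (j / 2))
    else StrP (F (j / 2) ++ [nextE (F (j / 2)) (w (j / 2))]) with hWdef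
  have hWe : ∀ k, W (2 * k) = nextE (F k) (w k) := by
    intro k
    have h1 : (2 * k) % 2 = 0 := by omega
    have h2 : 2 * k / 2 = k := by omega
    simp only [hWdef, h1, h2, if_pos]
  have hWo : ∀ k, W (2 * k + 1) = StrP (F k ++ [nextE (F k) (w k)]) := by
    intro k
    have h1 : (2 * k + 1) % 2 = 1 := by omega
    have h2 : (2 * k + 1) / 2 = k := by omega
    simp only [hWdef, h1, h2]
    norm_num
  have hW2k : ∀ k, W (2 * k) = ((Sum.inl ((w k).1), st k), 1, (Sum.inr (w k), st k)) := by
    intro k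
    rw [hWe]
    simp only [hnextE, hFend k, Sum.elim_inl]
  have hW2k_mem : ∀ k, W (2 * k) ∈ pg.edges := by
    intro k
    rw [hW2k]
    exact Or.inl ⟨w k, (hwpath k).1, st k, rfl⟩
  have hF1path : ∀ k, IsFinPath pg.edges pg.start (F k ++ [W (2 * k)])
      (Sum.inr (w k), st k) := by
    intro k
    have h1 := isFinPath_snoc_intro (hFpath k) (hW2k_mem k)
      (show (W (2 * k)).1 = (Sum.inl ((w k).1), st k) from congrArg Prod.fst (hW2k k))
    rwa [show (W (2 * k)).2.2 = (Sum.inr (w k), st k) from by rw [hW2k]] at h1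
  have hW2k1 : ∀ k, ∃ t, t ∈ A.trans ∧ tLetter t = w k ∧ tSrc t = st k ∧
      W (2 * k + 1) = ((Sum.inr (w k), st k), tPrio t, (Sum.inl ((w k).2.2), tTgt t)) ∧
      W (2 * k + 1) ∈ pg.edges := by
    intro k
    rw [hWo, ← hWe k]
    exact strP_inr _ _ _ (hF1path k)
  have hFsucc : ∀ k, F (k + 1) = (F k ++ [W (2 * k)]) ++ [W (2 * k + 1)] := by
    intro k
    have h1 : F (k + 1) = liftH ((List.range k).map w ++ [w k]) := by
      rw [hF]
      simp only [range_map_succ]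
    rw [h1, lift_snoc, hWe k, hWo k]
  have hepl_succ : ∀ k, epl pg.start (F (k + 1)) = (W (2 * k + 1)).2.2 := by
    intro k
    rw [hFsucc, epl_concat]
  have hst_succ : ∀ k t, tLetter t = w k → tSrc t = st k →
      W (2 * k + 1) = ((Sum.inr (w k), st k), tPrio t, (Sum.inl ((w k).2.2), tTgt t)) →
      st (k + 1) = tTgt t := by
    intro k t _ _ hsh
    have h1 := hepl_succ k
    rw [hsh] at h1
    rw [hstdef]
    simp only
    rw [h1]
  have hrangeW : ∀ k, (List.range (2 * k)).map W = F k ∧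
      (List.range (2 * k + 1)).map W = F k ++ [W (2 * k)] := by
    intro k
    induction k with
    | zero =>
      constructor
      · rfl
      · show (List.range (0 + 1)).map W = F 0 ++ [W (2 * 0)]
        rw [range_map_succ]
        rfl
    | succ k ih =>
      have ha : (List.range (2 * (k + 1))).map W = F (k + 1) := by
        rw [show 2 * (k + 1) = (2 * k + 1) + 1 by ring, range_map_succ, ih.2, hFsucc]
      refine ⟨ha, ?_⟩
      rw [range_map_succ, ha]
  have hWplay : pg.IsPlay W := by
    constructor
    · have h1 : (W (2 * 0)).1 = (Sum.inl ((w 0).1), st 0) := congrArg Prod.fst (hW2k 0)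
      rw [show 2 * 0 = 0 by ring] at h1
      rw [h1, hw0]
      have h2 : st 0 = A.init := by
        rw [hstdef]
        simp only [hF]
        rfl
      rw [h2]
      rfl
    · intro j
      rcases Nat.even_or_odd j with ⟨k, hk⟩ | ⟨k, hk⟩
      · have hj : j = 2 * k := by omega
        subst hj
        obtain ⟨t, -, -, -, hsh, -⟩ := hW2k1 k
        refine ⟨hW2k_mem k, ?_⟩
        rw [hW2k, hsh]
      · have hj : j = 2 * k + 1 := by omega
        subst hj
        obtain ⟨t, ht, hlt, hst', hsh, hmem⟩ := hW2k1 k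
        refine ⟨hmem, ?_⟩
        rw [hsh, show 2 * k + 1 + 1 = 2 * (k + 1) by ring, hW2k]
        have h1 : (w (k + 1)).1 = (w k).2.2 := ((hwpath k).2).symm
        have h2 : st (k + 1) = tTgt t := hst_succ k t hlt hst' hsh
        rw [h1, h2]
  have hWcons : ∀ j, pg.evenOwn ((W j).1) → W j = StrP ((List.range j).map W) := by
    intro j hown
    rcases Nat.even_or_odd j with ⟨k, hk⟩ | ⟨k, hk⟩
    · have hj : j = 2 * k := by omega
      subst hj
      have hsrcK : (W (2 * k)).1 = (Sum.inl ((w k).1), st k) := congrArg Prod.fst (hW2k k)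
      rw [hsrcK] at hown
      have hev : (w k).1 ∈ G.evenN := hown
      obtain ⟨e, he, hsrc, hshape, -⟩ := strP_inl (F k) ((w k).1) (st k) hev (hFpath k)
      have hse : str ((List.range k).map w) = e := by
        rw [hstr]
        simp only [← hF, hshape]
        exact congrArg (fun x => Sum.elim (fun _ => ((1, 1, 1) : Letter)) id x.2.2.1) hshape
      have hwe : w k = e := by rw [hcons k hev, hse]
      rw [(hrangeW k).1, hshape, hW2k, hwe]
    · have hj : j = 2 * k + 1 := by omega
      subst hj
      rw [(hrangeW k).2, hWo, hWe]
  have hMIO : MaxInfOftEven fun j => (W j).2.1 := hwin W hWplay hWcons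
  -- extract the run
  set tk : ℕ → Trans Q := fun k => (hW2k1 k).choose with htk
  have tkspec : ∀ k, tk k ∈ A.trans ∧ tLetter (tk k) = w k ∧ tSrc (tk k) = st k ∧
      W (2 * k + 1) = ((Sum.inr (w k), st k), tPrio (tk k),
        (Sum.inl ((w k).2.2), tTgt (tk k))) := by
    intro k
    obtain ⟨h1, h2, h3, h4, -⟩ := (hW2k1 k).choose_spec
    exact ⟨h1, h2, h3, h4⟩
  have hsttk : ∀ k, st (k + 1) = tTgt (tk k) := by
    intro k
    exact hst_succ k (tk k) (tkspec k).2.1 (tkspec k).2.2.1 (tkspec k).2.2.2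
  have hst0 : st 0 = A.init := by
    rw [hstdef]
    simp only [hF]
    rfl
  have hprio : ∀ k, (W (2 * k + 1)).2.1 = tPrio (tk k) := by
    intro k
    rw [(tkspec k).2.2.2]
  refine ⟨tk, ⟨?_, ?_⟩, ?_, ?_⟩
  · rw [(tkspec 0).2.2.1, hst0]
  · intro k
    exact ⟨(tkspec k).1, by rw [(tkspec (k + 1)).2.2.1, hsttk k]⟩
  · intro k
    exact (tkspec k).2.1
  · apply mio_even_down (g := fun j => (W j).2.1) (p := fun k => tPrio (tk k))
    · intro k
      rw [hW2k]
    · intro k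
      exact hprio k
    · intro k
      exact (hA.1 _ (tkspec k).1).2.1
    · exact hMIO

end Backward


/-- If `G` is a game graph with `n` nodes and priorities up to `d`,
and `A` is an SFPG separator with input alphabet `Σ_{n,d}`, then Even has a winning
strategy in `G` iff she has a winning strategy in the synchronized product `G × A`. -/

theorem sfpg_product_equiv (n d : ℕ) (hn : 1 ≤ n) (hd : 1 ≤ d)
    (G : GameGraph n d) {Q : Type} [Finite Q] (A : Automaton Q) (d' : ℕ)
    (hA : IsParityAutomaton n d d' A) (hSFPG : SFPG n d A) :
    EvenWins G.toPGame ↔ EvenWins (prodGame G A) := by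
  constructor
  · intro h
    rcases posdet G with ⟨τ, hτ⟩ | ⟨τ', hτ'⟩
    · obtain ⟨σ, hσ⟩ := hSFPG.2 G τ hτ
      exact forward_product G A d' hA τ σ hσ
    · exfalso
      obtain ⟨str, hval, hwin⟩ := h
      obtain ⟨w, hplay, hconsE, hAO⟩ := build_play str hval τ'
      have hLE : MaxInfOftEven fun k => (w k).2.1 := hwin w hplay hconsE
      exact absurd hLE (hτ' w hAO)
  · intro h
    rcases posdet G with ⟨τ, hτ⟩ | ⟨τ', hτ'⟩
    · exact epos_to_evenwins τ hτ
    · exfalso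
      obtain ⟨str, hval, hlang⟩ := backward_product G A d' hA h
      obtain ⟨w, hplay, hconsE, hAO⟩ := build_play str hval τ'
      have h1 : w ∈ Lang A := hlang w hplay hconsE
      have h2 : w ∈ PosOdd n d := ⟨G, τ', hτ', hAO⟩
      exact absurd h1 (hSFPG.1.2 w h2)

end PGSep
end

section
/- For every positive integer n and every even positive integer d, the language of the automaton R_{n,d} equals LimsupEven_{n,d}: an infinite word over Σ_{n,d} has an accepting run of R_{n,d} if and only if the largest priority occurring infinitely often in the word is even. -/
namespace PGSep

lemma infOft_finset (f : ℕ → ℕ) : ∀ S : Finset ℕ, (∀ N, ∃ t, N ≤ t ∧ f t ∈ S) → ∃ q ∈ S, InfOft f q := by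
  classical
  intro S
  induction S using Finset.induction_on with
  | empty => intro h; obtain ⟨t, _, ht⟩ := h 0; simp at ht
  | @insert a S ha ih =>
    intro h
    by_cases hia : InfOft f a
    · exact ⟨a, Finset.mem_insert_self _ _, hia⟩
    · unfold InfOft at hia; push_neg at hia
      obtain ⟨N0, hN0⟩ := hia
      have hS : ∀ N, ∃ t, N ≤ t ∧ f t ∈ S := by
        intro N
        obtain ⟨t, ht1, ht2⟩ := h (max N N0)
        refine ⟨t, le_trans (le_max_left _ _) ht1, ?_⟩
        rcases Finset.mem_insert.1 ht2 with h' | h'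
        · exact absurd h' (hN0 t (le_trans (le_max_right _ _) ht1))
        · exact h'
      obtain ⟨q, hq, hinf⟩ := ih hS
      exact ⟨q, Finset.mem_insert_of_mem hq, hinf⟩

lemma eventually_le_of_max (f : ℕ → ℕ) (D p : ℕ) (hb : ∀ t, f t ≤ D)
    (hmax : ∀ q, InfOft f q → q ≤ p) : ∃ N, ∀ t, N ≤ t → f t ≤ p := by
  by_contra hc
  push_neg at hc
  obtain ⟨q, hq, hinf⟩ := infOft_finset f (Finset.Ioc p D) (fun N => by
    obtain ⟨t, ht, hft⟩ := hc N
    exact ⟨t, ht, Finset.mem_Ioc.2 ⟨hft, hb t⟩⟩)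
  exact absurd (hmax q hinf) (not_le.2 (Finset.mem_Ioc.1 hq).1)

lemma exists_max_infOft (f : ℕ → ℕ) (D : ℕ) (hb : ∀ t, f t ≤ D) :
    ∃ p, InfOft f p ∧ ∀ q, InfOft f q → q ≤ p := by
  classical
  obtain ⟨q0, hq0, hinf0⟩ := infOft_finset f (Finset.Iic D)
    (fun N => ⟨N, le_refl N, Finset.mem_Iic.2 (hb N)⟩)
  set T := (Finset.Iic D).filter (fun q => InfOft f q) with hT
  have hne : T.Nonempty := ⟨q0, Finset.mem_filter.2 ⟨hq0, hinf0⟩⟩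
  refine ⟨T.max' hne, ?_, ?_⟩
  · exact (Finset.mem_filter.1 (T.max'_mem hne)).2
  · intro q hq
    have hqD : q ≤ D := by obtain ⟨t, _, ht⟩ := hq 0; exact ht ▸ hb t
    exact Finset.le_max' T q (Finset.mem_filter.2 ⟨Finset.mem_Iic.2 hqD, hq⟩)




lemma update_length (q : ℕ) : ∀ l : List ℕ, (update q l).length = l.length
  | [] => rfl
  | r :: l => by
    unfold update
    split
    · simp [update_length q l]
    · rfl

lemma mem_update {q x : ℕ} : ∀ {l : List ℕ}, x ∈ update q l → x = q ∨ x ∈ l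
  | [], h => by simp [update] at h
  | r :: l, h => by
    unfold update at h
    split at h
    · rcases List.mem_cons.1 h with h' | h'
      · exact Or.inl h'
      · rcases mem_update h' with h'' | h''
        · exact Or.inl h''
        · exact Or.inr (List.mem_cons_of_mem _ h'')
    · exact Or.inr h

lemma update_ge (q : ℕ) : ∀ l : List ℕ, List.Pairwise (·≤·) l → ∀ x ∈ update q l, q ≤ x
  | [], _, x, hx => by simp [update] at hx
  | r :: l, hs, x, hx => by
    rw [List.pairwise_cons] at hs
    unfold update at hx
    by_cases h : r < q
    · rw [if_pos h] at hx
      rcases List.mem_cons.1 hx with h' | h'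
      · exact h' ▸ le_refl q
      · exact update_ge q l hs.2 x h'
    · rw [if_neg h] at hx
      push_neg at h
      rcases List.mem_cons.1 hx with h' | h'
      · exact h' ▸ h
      · exact le_trans h (hs.1 x h')

lemma update_sorted (q : ℕ) : ∀ l : List ℕ, List.Pairwise (·≤·) l → List.Pairwise (·≤·) (update q l)
  | [], h => by simpa [update] using h
  | r :: l, h => by
    rw [List.pairwise_cons] at h
    unfold update
    by_cases hr : r < q
    · rw [if_pos hr]
      exact List.pairwise_cons.2 ⟨fun b hb => update_ge q l h.2 b hb, update_sorted q l h.2⟩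
    · rw [if_neg hr]
      exact List.pairwise_cons.2 h

lemma getD_update_le (q : ℕ) : ∀ (l : List ℕ) (m : ℕ), l.getD m 0 ≤ (update q l).getD m 0
  | [], m => le_refl _
  | r :: l, m => by
    unfold update
    by_cases hr : r < q
    · rw [if_pos hr]
      cases m with
      | zero => simpa using le_of_lt hr
      | succ m => simpa using getD_update_le q l m
    · rw [if_neg hr]

lemma getD_update_self (q : ℕ) (l : List ℕ) (m : ℕ) (hm : m < l.length)
    (hs : List.Pairwise (·≤·) l) : q ≤ (update q l).getD m 0 := by
  have hm' : m < (update q l).length := by rw [update_length]; exact hm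
  rw [List.getD_eq_getElem _ _ hm']
  exact update_ge q l hs _ (List.getElem_mem _)

lemma countP_take_update (P q : ℕ) (hq : q ≤ P) :
    ∀ (l : List ℕ) (m : ℕ),
      ((update q l).take m).countP (fun x => decide (P < x))
        = (l.take m).countP (fun x => decide (P < x))
  | [], m => rfl
  | r :: l, 0 => by simp
  | r :: l, m+1 => by
    unfold update
    by_cases hr : r < q
    · rw [if_pos hr]
      simp only [List.take_succ_cons, List.countP_cons]
      rw [countP_take_update P q hq l m]
      have h1 : ¬ P < q := not_lt.2 hq
      have h2 : ¬ P < r := not_lt.2 (le_trans (le_of_lt hr) hq)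
      simp [h1, h2]
    · rw [if_neg hr]

lemma getD_eraseIdx : ∀ (l : List ℕ) (i j : ℕ), i ≤ j → (l.eraseIdx i).getD j 0 = l.getD (j+1) 0
  | [], i, j, _ => by simp [List.eraseIdx]
  | a :: l, 0, j, _ => by simp [List.eraseIdx]
  | a :: l, i+1, j+1, h => by
    simp only [List.eraseIdx, List.getD_cons_succ]
    exact getD_eraseIdx l i j (Nat.le_of_succ_le_succ h)
  | a :: l, i+1, 0, h => absurd h (by omega)

lemma countP_take_erase (P : ℕ) (hP : 1 ≤ P) :
    ∀ (l : List ℕ) (i m : ℕ), i < m → m ≤ l.length →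
      ((1 :: l.eraseIdx i).take m).countP (fun x => decide (P < x))
        + (if P < l.getD i 0 then 1 else 0)
        = (l.take m).countP (fun x => decide (P < x))
  | [], i, m, h, hm => by simp at hm; omega
  | r :: l, 0, m+1, _, hm => by
    have h1 : ¬ P < 1 := by omega
    simp [List.eraseIdx_cons_zero, List.take_succ_cons, List.countP_cons, h1,
      List.getD_cons_zero]
  | r :: l, i+1, m+1, h, hm => by
    have h' : i < m := Nat.lt_of_succ_lt_succ h
    have hm' : m ≤ l.length := by simpa using Nat.le_of_succ_le_succ hm
    obtain ⟨m', rfl⟩ : ∃ m', m = m' + 1 := ⟨m - 1, by omega⟩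
    have ih := countP_take_erase P hP l i (m'+1) h' hm'
    have h1 : ¬ P < 1 := by omega
    simp only [List.eraseIdx_cons_succ, List.take_succ_cons, List.countP_cons,
      List.getD_cons_succ, decide_eq_true_eq, h1, if_false] at *
    omega

lemma length_resetReg (k : ℕ) (l : List ℕ) (h1 : 1 ≤ k) (h2 : k ≤ l.length) :
    (resetReg k l).length = l.length := by
  simp only [resetReg, List.length_cons]
  exact List.length_eraseIdx_add_one (by omega)

lemma sorted_resetReg (k : ℕ) (l : List ℕ) (hs : List.Pairwise (·≤·) l)
    (h1 : ∀ x ∈ l, 1 ≤ x) : List.Pairwise (·≤·) (resetReg k l) := by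
  refine List.pairwise_cons.2 ⟨?_, hs.sublist (List.eraseIdx_sublist l (k-1))⟩
  intro b hb
  exact h1 b ((List.eraseIdx_sublist l (k-1)).subset hb)

lemma mem_resetReg {k x : ℕ} {l : List ℕ} (h : x ∈ resetReg k l) : x = 1 ∨ x ∈ l := by
  rcases List.mem_cons.1 h with h | h
  · exact Or.inl h
  · exact Or.inr ((List.eraseIdx_sublist l (k-1)).subset h)

lemma regVal_resetReg (k' k0 : ℕ) (l : List ℕ) (h1 : 1 ≤ k') (h2 : k' < k0) :
    regVal k0 (resetReg k' l) = regVal k0 l := by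
  unfold regVal resetReg
  obtain ⟨k1, rfl⟩ : ∃ k1, k0 = k1 + 2 := ⟨k0 - 2, by omega⟩
  show (1 :: l.eraseIdx (k'-1)).getD (k1 + 1) 0 = l.getD (k1 + 1) 0
  rw [List.getD_cons_succ]
  exact getD_eraseIdx l (k'-1) k1 (by omega)

lemma countP_take_resetReg (P : ℕ) (hP : 1 ≤ P) (k m : ℕ) (l : List ℕ)
    (h1 : 1 ≤ k) (h2 : k ≤ m) (h3 : m ≤ l.length) :
    ((resetReg k l).take m).countP (fun x => decide (P < x))
      + (if P < regVal k l then 1 else 0)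
      = (l.take m).countP (fun x => decide (P < x)) :=
  countP_take_erase P hP l (k-1) m (by omega) h3

lemma regVal_update_le (q k : ℕ) (l : List ℕ) : regVal k l ≤ regVal k (update q l) :=
  getD_update_le q l (k-1)

lemma regVal_update_ge (q k : ℕ) (l : List ℕ) (h1 : 1 ≤ k) (h2 : k ≤ l.length)
    (hs : List.Pairwise (·≤·) l) : q ≤ regVal k (update q l) :=
  getD_update_self q l (k-1) (by omega) hs

lemma regVal_one_update (q : ℕ) (l : List ℕ) (hl : l ≠ []) :
    regVal 1 (update q l) = max (regVal 1 l) q := by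
  cases l with
  | nil => exact absurd rfl hl
  | cons r l =>
    unfold update regVal
    by_cases hr : r < q
    · rw [if_pos hr]; simp; omega
    · rw [if_neg hr]; simp; omega

lemma sorted_replicate (c x : ℕ) : List.Pairwise (·≤·) (List.replicate c x) := by
  induction c with
  | zero => simp
  | succ c ih =>
    rw [List.replicate_succ]
    exact List.pairwise_cons.2 ⟨fun b hb => le_of_eq (List.eq_of_mem_replicate hb).symm, ih⟩


open Classical in
noncomputable def runSt (n : ℕ) (w : Word) (rst : ℕ → Prop) : ℕ → List ℕ
  | 0 => List.replicate (rn n) 1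
  | t+1 => if rst t then resetReg 1 (update (prio (w t)) (runSt n w rst t))
           else update (prio (w t)) (runSt n w rst t)

open Classical in
noncomputable def runOf (n : ℕ) (w : Word) (rst : ℕ → Prop) (t : ℕ) : Trans (List ℕ) :=
  (runSt n w rst t, w t,
    (if rst t then
      (if Even (regVal 1 (update (prio (w t)) (runSt n w rst t))) then 2 else 3) else 1),
    runSt n w rst (t+1))

/-- The language of `R_{n,d}` equals `LimsupEven_{n,d}`: a word over
`Σ_{n,d}` is accepted by `R_{n,d}` iff the largest priority occurring infinitely
often in it is even. -/
theorem Raut_lang_eq_limsupEven (n d : ℕ) (hn : 1 ≤ n) (hd : 0 < d) (hde : Even d)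
    (w : Word) (hw : ∀ k, InAlph n d (w k)) :
    w ∈ Lang (Raut n d) ↔ LimsupEven w := by
  classical
  have hrn : 1 ≤ rn n := by unfold rn; omega
  constructor
  · -- forward: accepted → LimsupEven
    rintro ⟨ρ, hrun, hreads, hacc⟩
    have hsucc : ∀ t, tSrc (ρ (t+1)) = tTgt (ρ t) := fun t => ((hrun.2 t).2).symm
    -- structure of transitions
    have hstep : ∀ t, (tPrio (ρ t) = 1 ∧ tTgt (ρ t) = update (prio (w t)) (tSrc (ρ t))) ∨
        ∃ k, 1 ≤ k ∧ k ≤ rn n ∧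
          tTgt (ρ t) = resetReg k (update (prio (w t)) (tSrc (ρ t))) ∧
          ((Even (regVal k (update (prio (w t)) (tSrc (ρ t)))) ∧ tPrio (ρ t) = 2*k) ∨
           (¬ Even (regVal k (update (prio (w t)) (tSrc (ρ t)))) ∧ tPrio (ρ t) = 2*k+1)) := by
      intro t
      obtain ⟨s, e, he, hc⟩ := (hrun.2 t).1
      rcases hc with h | ⟨k, hk1, hk2, hc⟩
      · left
        have h1 : tPrio (ρ t) = 1 := by rw [h]; rfl
        have h2 : tLetter (ρ t) = e := by rw [h]; rfl
        have h3 : tSrc (ρ t) = s := by rw [h]; rfl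
        have h4 : tTgt (ρ t) = update (prio e) s := by rw [h]; rfl
        have he' : e = w t := by rw [← h2]; exact hreads t
        rw [h4, h3, he']
        exact ⟨h1, rfl⟩
      · right
        rcases hc with ⟨hev, h⟩ | ⟨hod, h⟩
        · have h1 : tPrio (ρ t) = 2*k := by rw [h]; rfl
          have h2 : tLetter (ρ t) = e := by rw [h]; rfl
          have h3 : tSrc (ρ t) = s := by rw [h]; rfl
          have h4 : tTgt (ρ t) = resetReg k (update (prio e) s) := by rw [h]; rfl
          have he' : e = w t := by rw [← h2]; exact hreads t
          rw [h4, h3, he']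
          rw [he'] at hev
          exact ⟨k, hk1, hk2, rfl, Or.inl ⟨hev, h1⟩⟩
        · have h1 : tPrio (ρ t) = 2*k+1 := by rw [h]; rfl
          have h2 : tLetter (ρ t) = e := by rw [h]; rfl
          have h3 : tSrc (ρ t) = s := by rw [h]; rfl
          have h4 : tTgt (ρ t) = resetReg k (update (prio e) s) := by rw [h]; rfl
          have he' : e = w t := by rw [← h2]; exact hreads t
          rw [h4, h3, he']
          rw [he'] at hod
          exact ⟨k, hk1, hk2, rfl, Or.inr ⟨Nat.not_even_iff_odd.2 hod, h1⟩⟩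
    -- state invariants
    have hinv : ∀ t, (tSrc (ρ t)).length = rn n ∧ List.Pairwise (·≤·) (tSrc (ρ t)) ∧
        ∀ x ∈ tSrc (ρ t), 1 ≤ x := by
      intro t
      induction t with
      | zero =>
        have h0 : tSrc (ρ 0) = List.replicate (rn n) 1 := hrun.1
        rw [h0]
        refine ⟨List.length_replicate, sorted_replicate _ _, ?_⟩
        intro x hx
        rw [List.eq_of_mem_replicate hx]
      | succ t ih =>
        rw [hsucc t]
        have hwt : 1 ≤ prio (w t) := (hw t).2.2.1
        have hupd : (update (prio (w t)) (tSrc (ρ t))).length = rn n := by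
          rw [update_length]; exact ih.1
        have hupds : List.Pairwise (·≤·) (update (prio (w t)) (tSrc (ρ t))) :=
          update_sorted _ _ ih.2.1
        have hupdm : ∀ x ∈ update (prio (w t)) (tSrc (ρ t)), 1 ≤ x := by
          intro x hx
          rcases mem_update hx with rfl | hx'
          · exact hwt
          · exact ih.2.2 x hx'
        rcases hstep t with ⟨_, h⟩ | ⟨k, hk1, hk2, h, _⟩
        · rw [h]; exact ⟨hupd, hupds, hupdm⟩
        · rw [h]
          refine ⟨?_, sorted_resetReg _ _ hupds hupdm, ?_⟩
          · rw [length_resetReg k _ hk1 (by rw [hupd]; exact hk2), hupd]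
          · intro x hx
            rcases mem_resetReg hx with rfl | hx'
            · exact le_refl 1
            · exact hupdm x hx'
    -- the maximal priority of the word
    have hfb : ∀ t, prio (w t) ≤ d := fun t => (hw t).2.2.2.1
    obtain ⟨ps, hpsInf, hpsMax⟩ := exists_max_infOft (fun t => prio (w t)) d hfb
    have hps1 : 1 ≤ ps := by
      obtain ⟨t, _, ht⟩ := hpsInf 0
      have h1 := (hw t).2.2.1
      have h2 : (w t).2.1 = ps := ht
      omega
    rcases Nat.even_or_odd ps with hE | hO
    · exact ⟨ps, hE, hpsInf, hpsMax⟩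
    exfalso
    -- the run priority data
    obtain ⟨P, hPeven, hPinf, hPmax⟩ := hacc
    obtain ⟨r, hr⟩ := hPeven
    have hρb : ∀ t, tPrio (ρ t) ≤ 2 * rn n + 1 := by
      intro t
      rcases hstep t with ⟨h1, _⟩ | ⟨k, hk1, hk2, _, hc⟩
      · omega
      · rcases hc with ⟨_, hp⟩ | ⟨_, hp⟩ <;> omega
    obtain ⟨t', _, hpt'⟩ := hPinf 0
    have hpt : tPrio (ρ t') = P := hpt'
    have hk0b : 1 ≤ r ∧ r ≤ rn n := by
      rcases hstep t' with ⟨h1, _⟩ | ⟨k, hk1, hk2, _, hc⟩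
      · omega
      · rcases hc with ⟨_, hp⟩ | ⟨_, hp⟩ <;> omega
    obtain ⟨hk0one, hk0rn⟩ := hk0b
    obtain ⟨N1, hN1⟩ := eventually_le_of_max (fun t => tPrio (ρ t)) (2 * rn n + 1) P hρb hPmax
    obtain ⟨N2, hN2⟩ := eventually_le_of_max (fun t => prio (w t)) d ps hfb hpsMax
    set M := max N1 N2 with hM
    set B : ℕ → ℕ := fun t => ((tSrc (ρ t)).take r).countP (fun x => decide (ps < x)) with hBdef
    -- B is nonincreasing after M, strictly decreasing at big even r-resets
    have hupdB : ∀ t, N2 ≤ t →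
        ((update (prio (w t)) (tSrc (ρ t))).take r).countP (fun x => decide (ps < x)) = B t :=
      fun t ht => countP_take_update ps _ (hN2 t ht) _ r
    have hlenu : ∀ t, r ≤ (update (prio (w t)) (tSrc (ρ t))).length := by
      intro t; rw [update_length, (hinv t).1]; exact hk0rn
    have hBle : ∀ t, M ≤ t → B (t+1) ≤ B t := by
      intro t ht
      have hPb : tPrio (ρ t) ≤ 2*r := by
        have hx : tPrio (ρ t) ≤ P := hN1 t (le_trans (le_max_left _ _) ht); omega
      have hupd := hupdB t (le_trans (le_max_right _ _) ht)
      rcases hstep t with ⟨_, h⟩ | ⟨k, hk1, hk2, h, hc⟩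
      · have : B (t+1) = B t := by
          simp only [hBdef]; rw [hsucc t, h]
          exact hupd
        omega
      · have hkk0 : k ≤ r := by rcases hc with ⟨_, hp⟩ | ⟨_, hp⟩ <;> omega
        have hkey := countP_take_resetReg ps hps1 k r
          (update (prio (w t)) (tSrc (ρ t))) hk1 hkk0 (hlenu t)
        rw [hupd] at hkey
        have hB1 : B (t+1)
            = ((resetReg k (update (prio (w t)) (tSrc (ρ t)))).take r).countP
                (fun x => decide (ps < x)) := by
          simp only [hBdef]; rw [hsucc t, h]
        rw [hB1]; omega
    have hBmono : ∀ t j, M ≤ t → B (t + j) ≤ B t := by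
      intro t j ht
      induction j with
      | zero => exact le_refl _
      | succ j ih => exact le_trans (hBle (t + j) (by omega)) ih
    -- register r monotone at non-(2r)-steps after M
    have hmono : ∀ t, M ≤ t → tPrio (ρ t) ≠ 2*r →
        regVal r (tSrc (ρ t)) ≤ regVal r (tSrc (ρ (t+1))) := by
      intro t ht hne
      have hPb : tPrio (ρ t) ≤ 2*r := by
        have hx : tPrio (ρ t) ≤ P := hN1 t (le_trans (le_max_left _ _) ht); omega
      rw [hsucc t]
      rcases hstep t with ⟨_, h⟩ | ⟨k, hk1, _, h, hc⟩
      · rw [h]; exact regVal_update_le _ _ _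
      · have hkk : k < r := by rcases hc with ⟨_, hp⟩ | ⟨_, hp⟩ <;> omega
        rw [h, regVal_resetReg k r _ hk1 hkk]
        exact regVal_update_le _ _ _
    -- eventual constancy of B
    have hSne : {b | ∃ t, M ≤ t ∧ B t = b}.Nonempty := ⟨B M, M, le_refl M, rfl⟩
    obtain ⟨T0, hT0M, hT0⟩ := Nat.sInf_mem hSne
    obtain ⟨t1, ht1, hft1⟩ := hpsInf T0
    have ht1M : M ≤ t1 := le_trans hT0M ht1
    have hexx : ∃ j, tPrio (ρ (t1 + j)) = 2*r := by
      obtain ⟨t, ht, h⟩ := hPinf t1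
      have h' : tPrio (ρ t) = P := h
      exact ⟨t - t1, by rw [Nat.add_sub_cancel' ht, h']; omega⟩
    set j0 := Nat.find hexx with hj0
    have hspec : tPrio (ρ (t1 + j0)) = 2*r := Nat.find_spec hexx
    have hmin : ∀ j, j < j0 → tPrio (ρ (t1 + j)) ≠ 2*r := fun j hj => Nat.find_min hexx hj
    -- register r stays ≥ ps on the way to the reset
    have hge : ∀ j, 1 ≤ j → t1 + j ≤ t1 + j0 → ps ≤ regVal r (tSrc (ρ (t1 + j))) := by
      intro j
      induction j with
      | zero => intro h; omega
      | succ j ih =>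
        intro _ hle
        have hbase : ∀ u, M ≤ u → tPrio (ρ u) ≠ 2*r → prio (w u) = ps →
            ps ≤ regVal r (tSrc (ρ (u+1))) := by
          intro u hu hne hpu
          have hPb : tPrio (ρ u) ≤ 2*r := by
            have hx : tPrio (ρ u) ≤ P := hN1 u (le_trans (le_max_left _ _) hu); omega
          rw [hsucc u]
          rcases hstep u with ⟨_, h⟩ | ⟨k, hk1, _, h, hc⟩
          · rw [h, ← hpu]
            exact regVal_update_ge _ r _ hk0one (by rw [(hinv u).1]; exact hk0rn) (hinv u).2.1
          · have hkk : k < r := by rcases hc with ⟨_, hp⟩ | ⟨_, hp⟩ <;> omega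
            rw [h, regVal_resetReg k r _ hk1 hkk, ← hpu]
            exact regVal_update_ge _ r _ hk0one (by rw [(hinv u).1]; exact hk0rn) (hinv u).2.1
        rcases Nat.eq_zero_or_pos j with h0 | hpos
        · subst h0
          have hj0pos : 0 < j0 := by omega
          exact hbase t1 ht1M (by simpa using hmin 0 hj0pos) hft1
        · have h1 := ih hpos (by omega)
          have h2 := hmono (t1 + j) (by omega) (hmin j (by omega))
          calc ps ≤ regVal r (tSrc (ρ (t1 + j))) := h1
            _ ≤ regVal r (tSrc (ρ (t1 + j + 1))) := h2
            _ = regVal r (tSrc (ρ (t1 + (j + 1)))) := by rw [Nat.add_assoc]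
    -- the transition at t2 := t1 + j0 is an even reset of register r with a big value
    set t2 := t1 + j0 with ht2def
    have ht2M : M ≤ t2 := by omega
    rcases hstep t2 with ⟨h1, _⟩ | ⟨k, hk1, hk2, h, hc⟩
    · omega
    have hkk : k = r := by rcases hc with ⟨_, hp⟩ | ⟨_, hp⟩ <;> omega
    subst hkk
    have hveven : Even (regVal k (update (prio (w t2)) (tSrc (ρ t2)))) := by
      rcases hc with ⟨he, _⟩ | ⟨_, hp⟩
      · exact he
      · omega
    have hvge : ps ≤ regVal k (update (prio (w t2)) (tSrc (ρ t2))) := by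
      rcases Nat.eq_zero_or_pos j0 with h0 | hpos
      · have ht2eq : t2 = t1 := by omega
        rw [ht2eq, ← hft1]
        exact regVal_update_ge _ k _ hk0one (by rw [(hinv t1).1]; exact hk0rn) (hinv t1).2.1
      · exact le_trans (hge j0 hpos (le_refl _)) (regVal_update_le _ _ _)
    have hvlt : ps < regVal k (update (prio (w t2)) (tSrc (ρ t2))) := by
      rcases Nat.lt_or_ge ps (regVal k (update (prio (w t2)) (tSrc (ρ t2)))) with h' | h'
      · exact h'
      · exfalso
        have : ps = regVal k (update (prio (w t2)) (tSrc (ρ t2))) := le_antisymm hvge h'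
        rw [← this] at hveven
        exact (Nat.not_even_iff_odd.2 hO) hveven
    -- strict decrease of B at t2
    have hupd := hupdB t2 (le_trans (le_max_right _ _) ht2M)
    have hkey := countP_take_resetReg ps hps1 k k
      (update (prio (w t2)) (tSrc (ρ t2))) hk0one (le_refl _) (hlenu t2)
    rw [hupd, if_pos hvlt] at hkey
    have hB1 : B (t2+1)
        = ((resetReg k (update (prio (w t2)) (tSrc (ρ t2)))).take k).countP
            (fun x => decide (ps < x)) := by
      simp only [hBdef]; rw [hsucc t2, h]
    have hdec : B (t2+1) < B t2 := by omega
    -- contradiction with eventual constancy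
    have hb1 : B t2 ≤ B T0 := by
      have := hBmono T0 (t2 - T0) hT0M
      rw [Nat.add_sub_cancel' (by omega : T0 ≤ t2)] at this
      exact this
    have hb2 : sInf {b | ∃ t, M ≤ t ∧ B t = b} ≤ B (t2+1) :=
      Nat.sInf_le ⟨t2+1, by omega, rfl⟩
    omega
  · -- backward: LimsupEven → accepted
    rintro ⟨p, hpe, hpinf, hpmax⟩
    have hfb : ∀ t, prio (w t) ≤ d := fun t => (hw t).2.2.2.1
    obtain ⟨N, hN⟩ := eventually_le_of_max (fun t => prio (w t)) d p hfb hpmax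
    have hp1 : 1 ≤ p := by
      obtain ⟨t, _, ht⟩ := hpinf 0
      have h1 := (hw t).2.2.1
      have h2 : (w t).2.1 = p := ht
      omega
    set rst : ℕ → Prop := fun t => N ≤ t ∧ prio (w t) = p with hrstdef
    have hlen : ∀ t, (runSt n w rst t).length = rn n := by
      intro t
      induction t with
      | zero => simp [runSt]
      | succ t ih =>
        rw [runSt]
        by_cases hr : rst t
        · rw [if_pos hr, length_resetReg 1 _ (le_refl 1) (by rw [update_length, ih]; exact hrn),
            update_length, ih]
        · rw [if_neg hr, update_length, ih]
    have hne : ∀ t, runSt n w rst t ≠ [] := by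
      intro t hnil
      have := hlen t
      rw [hnil] at this
      simp at this
      omega
    refine ⟨runOf n w rst, ⟨rfl, ?_⟩, fun t => rfl, ?_⟩
    · -- transitions valid
      intro t
      refine ⟨?_, rfl⟩
      show runOf n w rst t ∈ (Raut n d).trans
      refine ⟨runSt n w rst t, w t, hw t, ?_⟩
      by_cases hr : rst t
      · right
        refine ⟨1, le_refl 1, hrn, ?_⟩
        by_cases hev : Even (regVal 1 (update (prio (w t)) (runSt n w rst t)))
        · left
          refine ⟨hev, ?_⟩
          show (runSt n w rst t, w t, _, runSt n w rst (t+1)) = _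
          rw [runSt, if_pos hr]
          simp [runOf, if_pos hr, if_pos hev]
        · right
          refine ⟨Nat.not_even_iff_odd.1 hev, ?_⟩
          show (runSt n w rst t, w t, _, runSt n w rst (t+1)) = _
          rw [runSt, if_pos hr]
          simp [runOf, if_pos hr, if_neg hev]
      · left
        show (runSt n w rst t, w t, _, runSt n w rst (t+1)) = _
        rw [runSt, if_neg hr]
        simp [runOf, if_neg hr]
    · -- accepting
      obtain ⟨t0, ht0N, ht0p⟩ := hpinf N
      have hrst0 : rst t0 := ⟨ht0N, ht0p⟩
      have hhead : ∀ j, regVal 1 (runSt n w rst (t0 + 1 + j)) ≤ p := by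
        intro j
        induction j with
        | zero =>
          have heq : runSt n w rst (t0 + 1 + 0)
              = resetReg 1 (update (prio (w t0)) (runSt n w rst t0)) := by
            simp only [Nat.add_zero]
            rw [runSt, if_pos hrst0]
          rw [heq]
          simp [resetReg, regVal]
          omega
        | succ j ih =>
          have heq : t0 + 1 + (j + 1) = (t0 + 1 + j) + 1 := by omega
          rw [heq, runSt]
          by_cases hr : rst (t0 + 1 + j)
          · rw [if_pos hr]
            simp [resetReg, regVal]
            omega
          · rw [if_neg hr]
            rw [regVal_one_update _ _ (hne (t0 + 1 + j))]
            have hle : prio (w (t0 + 1 + j)) ≤ p := hN _ (by omega)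
            exact max_le ih hle
      have hg : ∀ t, tPrio (runOf n w rst t)
          = if rst t then
              (if Even (regVal 1 (update (prio (w t)) (runSt n w rst t))) then 2 else 3)
            else 1 := by
        intro t
        simp only [runOf, tPrio]
        congr
      have hkey : ∀ t, t0 < t → rst t → tPrio (runOf n w rst t) = 2 := by
        intro t ht hrt
        have h1 : regVal 1 (runSt n w rst t) ≤ p := by
          obtain ⟨j, rfl⟩ : ∃ j, t = t0 + 1 + j := ⟨t - (t0 + 1), by omega⟩
          exact hhead j
        have h2 : regVal 1 (update (prio (w t)) (runSt n w rst t)) = p := by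
          rw [regVal_one_update _ _ (hne t), hrt.2]
          omega
        rw [hg, if_pos hrt, if_pos (by rw [h2]; exact hpe)]
      refine ⟨2, ⟨1, rfl⟩, ?_, ?_⟩
      · intro T
        obtain ⟨t, ht, hpt⟩ := hpinf (max (max T (t0 + 1)) N)
        have hT : T ≤ t := le_trans (le_trans (le_max_left _ _) (le_max_left _ _)) ht
        have ht0' : t0 + 1 ≤ t := le_trans (le_trans (le_max_right _ _) (le_max_left _ _)) ht
        have hNt : N ≤ t := le_trans (le_max_right _ _) ht
        exact ⟨t, hT, hkey t (by omega) ⟨hNt, hpt⟩⟩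
      · intro q hq
        obtain ⟨t, ht, hqt⟩ := hq (t0 + 1)
        have hqt' : tPrio (runOf n w rst t) = q := hqt
        by_cases hrt : rst t
        · have := hkey t (by omega) hrt
          omega
        · have : tPrio (runOf n w rst t) = 1 := by rw [hg, if_neg hrt]
          omega

end PGSep
end
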